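/- arXiv:cs/0202001 — 5 statements merged into one kernel-verified Lean document; each statement's English description precedes it below -/
import Mathlib

section
/- For every positive choice program P, the first-order equivalent foe(P) has at least one total stable model. -/
/-!
# STATEMENT 0

For every positive choice program `P`, the first-order equivalent `foe(P)` has
at least one total stable model.

We formalize ground normal logic programs together with (two-valued, hence
*total*) Gelfond–Lifschitz stable models, Datalog rules with `choice((X),(Y))`
goals, and the first-order equivalent `foe` obtained by the standard
`chosen`/`diffChoice` rewriting of the choice goals.
-/

/-- A ground normal logic-program rule over ground atoms `α`. -/
structure GRule (α : Type) where
  head : α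
  pos : Set α
  neg : Set α

/-- A ground normal logic program is a set of ground rules. -/
abbrev GProgram (α : Type) := Set (GRule α)

/-- `M` satisfies a ground rule. -/
def GRule.Sat {α : Type} (r : GRule α) (M : Set α) : Prop :=
  r.pos ⊆ M → (∀ a ∈ r.neg, a ∉ M) → r.head ∈ M

/-- `M` is a model of (i.e. closed under) the program `P`. -/
def IsModel {α : Type} (P : GProgram α) (M : Set α) : Prop := ∀ r ∈ P, r.Sat M

/-- The Gelfond–Lifschitz reduct of `P` with respect to `M`: delete every rule
whose negative body intersects `M`, and delete the negative bodies of the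
remaining rules. -/
def reduct {α : Type} (P : GProgram α) (M : Set α) : GProgram α :=
  {r | ∃ r' ∈ P, (∀ a ∈ r'.neg, a ∉ M) ∧ r = ⟨r'.head, r'.pos, ∅⟩}

/-- The least (Herbrand) model of a program: the intersection of all models. -/
def leastModel {α : Type} (P : GProgram α) : Set α := ⋂₀ {N | IsModel P N}

/-- `M` is a (total, two-valued) stable model of `P` in the sense of
Gelfond–Lifschitz: `M` is the least model of the reduct of `P` by `M`.
Every such model is total: each atom is either true (in `M`) or false. -/
def IsStableModel {α : Type} (P : GProgram α) (M : Set α) : Prop :=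
  M = leastModel (reduct P M)

/-! ## Datalog with choice goals -/

/-- Terms: variables (named by naturals) and constants from `C`. -/
inductive Term (C : Type) where
  | var (v : ℕ)
  | const (c : C)

/-- A relational schema: predicate symbols with arities. -/
structure Schema where
  pred : Type
  ar : pred → ℕ

/-- A (possibly non-ground) atom over schema `S` and constants `C`. -/
structure Atom (S : Schema) (C : Type) where
  p : S.pred
  args : Fin (S.ar p) → Term C

/-- A ground atom. -/
structure GAtom (S : Schema) (C : Type) where
  p : S.pred
  args : Fin (S.ar p) → C

/-- A Datalog rule whose body may additionally contain choice goals
`choice((X),(Y))`, recorded in `cgoals` as pairs `(X, Y)` of disjoint lists of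
variables, with nonempty right side `Y`. -/
structure CRule (S : Schema) (C : Type) where
  head : Atom S C
  pos : List (Atom S C)
  neg : List (Atom S C)
  cgoals : List (List ℕ × List ℕ)
  cgoals_disjoint : ∀ g ∈ cgoals, ∀ v ∈ g.1, v ∉ g.2
  cgoals_right_ne : ∀ g ∈ cgoals, g.2 ≠ []

/-- A choice program: a finite list of rules, possibly with choice goals. -/
abbrev CProgram (S : Schema) (C : Type) := List (CRule S C)

/-- A choice program is *positive* when its non-choice goals contain no
negation. -/
def CProgram.Positive {S : Schema} {C : Type} (P : CProgram S C) : Prop :=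
  ∀ r ∈ P, r.neg = []

def Term.eval {C : Type} (ν : ℕ → C) : Term C → C
  | .var v => ν v
  | .const c => c

def Atom.ground {S : Schema} {C : Type} (a : Atom S C) (ν : ℕ → C) : GAtom S C :=
  ⟨a.p, fun i => (a.args i).eval ν⟩

/-- `W`: the list of all variables occurring in the choice goals of a rule. -/
def CRule.W {S : Schema} {C : Type} (r : CRule S C) : List ℕ :=
  (r.cgoals.flatMap fun g => g.1 ++ g.2).dedup

/-- Atoms of the first-order equivalent `foe(P)`: the original (base) atoms
together with `chosen_r` and `diffChoice_r` atoms for each choice rule `r`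
(rules are referred to by their position in the program). -/
inductive FAtom (S : Schema) (C : Type) where
  | base (a : GAtom S C)
  | chosen (r : ℕ) (w : List C)
  | diff (r : ℕ) (w : List C)

/-- The (ground) positive body of an instantiated rule, as base atoms. -/
def posBody {S : Schema} {C : Type} (r : CRule S C) (ν : ℕ → C) : Set (FAtom S C) :=
  {x | ∃ a ∈ r.pos, x = FAtom.base (a.ground ν)}

/-- The (ground) negative body of an instantiated rule, as base atoms. -/
def negBody {S : Schema} {C : Type} (r : CRule S C) (ν : ℕ → C) : Set (FAtom S C) :=
  {x | ∃ a ∈ r.neg, x = FAtom.base (a.ground ν)}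

/-- The first-order equivalent `foe(P)` of a choice program `P` over the
database `edb`, given as the set of its ground instances:

* facts of the database;
* rules without choice goals, unchanged;
* for each choice rule `r : A ← B(Z), choice((X₁),(Y₁)), …, choice((Xₖ),(Yₖ))`:
  - `r′ : A ← B(Z), chosenᵣ(W)` where `W` lists all variables of the choice goals,
  - `chosenᵣ(W) ← B(Z), ¬ diffChoiceᵣ(W)`,
  - for each choice goal `choice((Xᵢ),(Yᵢ))`:
    `diffChoiceᵣ(W) ← chosenᵣ(W′), Yᵢ ≠ Yᵢ′` where `W′` agrees with `W` on `Xᵢ`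
    (all other variables being fresh primed copies). -/
def foe {S : Schema} {C : Type} (P : CProgram S C) (edb : Set (GAtom S C)) :
    GProgram (FAtom S C) :=
  {r | ∃ a ∈ edb, r = ⟨FAtom.base a, ∅, ∅⟩} ∪
  {r | ∃ i : Fin P.length, ∃ ν : ℕ → C, (P.get i).cgoals = [] ∧
        r = ⟨FAtom.base ((P.get i).head.ground ν), posBody (P.get i) ν,
             negBody (P.get i) ν⟩} ∪
  {r | ∃ i : Fin P.length, ∃ ν : ℕ → C, (P.get i).cgoals ≠ [] ∧
        r = ⟨FAtom.base ((P.get i).head.ground ν),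
             insert (FAtom.chosen i ((P.get i).W.map ν)) (posBody (P.get i) ν),
             negBody (P.get i) ν⟩} ∪
  {r | ∃ i : Fin P.length, ∃ ν : ℕ → C, (P.get i).cgoals ≠ [] ∧
        r = ⟨FAtom.chosen i ((P.get i).W.map ν), posBody (P.get i) ν,
             insert (FAtom.diff i ((P.get i).W.map ν)) (negBody (P.get i) ν)⟩} ∪
  {r | ∃ i : Fin P.length, ∃ g ∈ (P.get i).cgoals, ∃ ν ν' : ℕ → C,
        (∀ v ∈ g.1, ν v = ν' v) ∧ (∃ v ∈ g.2, ν v ≠ ν' v) ∧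
        r = ⟨FAtom.diff i ((P.get i).W.map ν),
             {FAtom.chosen i ((P.get i).W.map ν')}, ∅⟩}

/-! ## Auxiliary development for the proof -/

section AuxProof

open Classical

variable {S : Schema} {C : Type}

theorem leastModel_subset {α : Type} {D : GProgram α} {N : Set α} (h : IsModel D N) :
    leastModel D ⊆ N := Set.sInter_subset_of_mem h

theorem definite_isModel_least {α : Type} {D : GProgram α} (hD : ∀ r ∈ D, r.neg = ∅) :
    IsModel D (leastModel D) := by
  intro r hr hp _
  rw [leastModel, Set.mem_sInter]
  intro N hN
  refine hN r hr (fun x hx => Set.mem_sInter.1 (hp hx) N hN) ?_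
  intro a ha
  rw [hD r hr] at ha
  exact absurd ha (Set.notMem_empty a)

theorem reduct_definite {α : Type} (D : GProgram α) (M : Set α) :
    ∀ r ∈ reduct D M, r.neg = ∅ := by
  rintro r ⟨r', _, _, rfl⟩; rfl

theorem negBody_empty {r : CRule S C} (h : r.neg = []) (ν : ℕ → C) : negBody r ν = ∅ := by
  ext x; simp [negBody, h]

/-- The positive program obtained from `foe` by keeping the definite rules and
adding the atoms of `K` as facts. -/
def Qprog (P : CProgram S C) (edb : Set (GAtom S C)) (K : Set (FAtom S C)) :
    GProgram (FAtom S C) :=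
  {r | r ∈ foe P edb ∧ r.neg = ∅} ∪ {r | ∃ c ∈ K, r = ⟨c, ∅, ∅⟩}

theorem Qprog_definite (P : CProgram S C) (edb : Set (GAtom S C)) (K : Set (FAtom S C)) :
    ∀ r ∈ Qprog P edb K, r.neg = ∅ := by
  rintro r (⟨_, h⟩ | ⟨c, _, rfl⟩)
  · exact h
  · rfl

/-- Least model of `Qprog`. -/
def MK (P : CProgram S C) (edb : Set (GAtom S C)) (K : Set (FAtom S C)) : Set (FAtom S C) :=
  leastModel (Qprog P edb K)

theorem MK_isModel (P : CProgram S C) (edb : Set (GAtom S C)) (K : Set (FAtom S C)) :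
    IsModel (Qprog P edb K) (MK P edb K) :=
  definite_isModel_least (Qprog_definite P edb K)

theorem K_subset_MK (P : CProgram S C) (edb : Set (GAtom S C)) (K : Set (FAtom S C)) :
    K ⊆ MK P edb K := by
  intro c hc
  have h := MK_isModel P edb K ⟨c, ∅, ∅⟩ (Or.inr ⟨c, hc, rfl⟩)
  exact h (Set.empty_subset _) (fun a ha => absurd ha (Set.notMem_empty a))

theorem model_Qprog_of {P : CProgram S C} {edb : Set (GAtom S C)} {K N : Set (FAtom S C)}
    (hN0 : ∀ r ∈ foe P edb, r.neg = ∅ → r.Sat N) (hK : K ⊆ N) :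
    IsModel (Qprog P edb K) N := by
  rintro r (⟨hr, hneg⟩ | ⟨c, hc, rfl⟩)
  · exact hN0 r hr hneg
  · intro _ _; exact hK hc

theorem reduct_contains_definite {P : CProgram S C} {edb : Set (GAtom S C)}
    {M : Set (FAtom S C)} : ∀ r ∈ foe P edb, r.neg = ∅ → r ∈ reduct (foe P edb) M := by
  intro r hr hneg
  refine ⟨r, hr, ?_, ?_⟩
  · intro a ha; rw [hneg] at ha; exact absurd ha (Set.notMem_empty a)
  · obtain ⟨h, p, n⟩ := r
    simp only at hneg
    rw [hneg]

/-- Conflict between two value lists for the choice goals of rule `i`. -/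
def Confl (P : CProgram S C) (i : Fin P.length) (w w' : List C) : Prop :=
  ∃ g ∈ (P.get i).cgoals, ∃ α β : ℕ → C,
    (∀ v ∈ g.1, α v = β v) ∧ (∃ v ∈ g.2, α v ≠ β v) ∧
    w = (P.get i).W.map α ∧ w' = (P.get i).W.map β

theorem Confl.symm {P : CProgram S C} {i : Fin P.length} {w w' : List C}
    (h : Confl P i w w') : Confl P i w' w := by
  obtain ⟨g, hg, α, β, h1, ⟨v, hv, hne⟩, h2, h3⟩ := h
  exact ⟨g, hg, β, α, fun u hu => (h1 u hu).symm, ⟨v, hv, fun hh => hne hh.symm⟩, h3, h2⟩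

theorem mem_W_of_mem_right {r : CRule S C} {g : List ℕ × List ℕ} (hg : g ∈ r.cgoals)
    {v : ℕ} (hv : v ∈ g.2) : v ∈ r.W := by
  rw [CRule.W, List.mem_dedup, List.mem_flatMap]
  exact ⟨g, hg, List.mem_append.2 (Or.inr hv)⟩

theorem Confl.irrefl {P : CProgram S C} {i : Fin P.length} {w : List C} :
    ¬ Confl P i w w := by
  rintro ⟨g, hg, α, β, h1, ⟨v, hv, hne⟩, h2, h3⟩
  have heq : (P.get i).W.map α = (P.get i).W.map β := h2 ▸ h3
  exact hne (List.map_eq_map_iff.1 heq v (mem_W_of_mem_right hg hv))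

/-- `w` is blocked for rule `i` by a chosen atom in `K`. -/
def Blocked (P : CProgram S C) (K : Set (FAtom S C)) (i : Fin P.length) (w : List C) : Prop :=
  ∃ w', FAtom.chosen i.val w' ∈ K ∧ Confl P i w w'

/-- Overapproximation of `MK P edb K`: base atoms, the chosen atoms of `K`, and
blocked diff atoms. -/
def GoodSet (P : CProgram S C) (K : Set (FAtom S C)) : Set (FAtom S C) :=
  {x | (∃ a, x = FAtom.base a) ∨ x ∈ K ∨
    ∃ i : Fin P.length, ∃ w, x = FAtom.diff i.val w ∧ Blocked P K i w}

theorem good_isModel (P : CProgram S C) (edb : Set (GAtom S C)) (K : Set (FAtom S C)) :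
    IsModel (Qprog P edb K) (GoodSet P K) := by
  rintro r (⟨hr, hneg⟩ | ⟨c, hc, rfl⟩)
  · rcases hr with ((((⟨a, _, rfl⟩ | ⟨i, ν, _, rfl⟩) | ⟨i, ν, _, rfl⟩) | ⟨i, ν, _, rfl⟩) |
      ⟨i, g, hg, ν, ν', h1, h2, rfl⟩)
    · exact fun _ _ => Or.inl ⟨_, rfl⟩
    · exact fun _ _ => Or.inl ⟨_, rfl⟩
    · exact fun _ _ => Or.inl ⟨_, rfl⟩
    · exfalso
      simp only at hneg
      exact (Set.insert_nonempty _ _).ne_empty hneg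
    · intro hp _
      have hc : FAtom.chosen i.val ((P.get i).W.map ν') ∈ GoodSet P K :=
        hp (Set.mem_singleton _)
      rcases hc with ⟨a, heq⟩ | hcK | ⟨i', w', heq, _⟩
      · cases heq
      · exact Or.inr (Or.inr ⟨i, _, rfl, ⟨_, hcK, g, hg, ν, ν', h1, h2, rfl, rfl⟩⟩)
      · cases heq
  · exact fun _ _ => Or.inr (Or.inl hc)

theorem blocked_of_diff_mem {P : CProgram S C} {edb : Set (GAtom S C)} {K : Set (FAtom S C)}
    (hK : ∀ c ∈ K, ∃ j : Fin P.length, ∃ u, c = FAtom.chosen j.val u)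
    {i : Fin P.length} {w : List C} (h : FAtom.diff i.val w ∈ MK P edb K) :
    Blocked P K i w := by
  have hsub : MK P edb K ⊆ GoodSet P K := leastModel_subset (good_isModel P edb K)
  rcases hsub h with ⟨a, heq⟩ | hK2 | ⟨i', w', heq, hb⟩
  · cases heq
  · obtain ⟨j, u, heq⟩ := hK _ hK2
    cases heq
  · obtain ⟨h1, h2⟩ := FAtom.diff.inj heq
    obtain rfl : i = i' := Fin.val_injective h1
    rw [h2]
    exact hb

theorem diff_mem_of_blocked {P : CProgram S C} {edb : Set (GAtom S C)} {K : Set (FAtom S C)}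
    {i : Fin P.length} {w : List C} (h : Blocked P K i w) :
    FAtom.diff i.val w ∈ MK P edb K := by
  obtain ⟨w', hcK, g, hg, α, β, h1, h2, rfl, rfl⟩ := h
  have hrule : (⟨FAtom.diff i.val ((P.get i).W.map α),
      {FAtom.chosen i.val ((P.get i).W.map β)}, ∅⟩ : GRule (FAtom S C)) ∈ foe P edb :=
    Or.inr ⟨i, g, hg, α, β, h1, h2, rfl⟩
  have hmem : (⟨FAtom.diff i.val ((P.get i).W.map α),
      {FAtom.chosen i.val ((P.get i).W.map β)}, ∅⟩ : GRule (FAtom S C)) ∈ Qprog P edb K :=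
    Or.inl ⟨hrule, rfl⟩
  refine MK_isModel P edb K _ hmem ?_ ?_
  · intro x hx
    rw [Set.mem_singleton_iff] at hx
    subst hx
    exact K_subset_MK P edb K hcK
  · intro a ha; exact absurd ha (Set.notMem_empty a)

/-- Eligibility of an instantiation `(i, ν)` of a choice rule for being chosen. -/
def Elig (P : CProgram S C) (edb : Set (GAtom S C)) (K : Set (FAtom S C))
    (i : Fin P.length) (ν : ℕ → C) : Prop :=
  (P.get i).cgoals ≠ [] ∧ posBody (P.get i) ν ⊆ MK P edb K ∧
  FAtom.chosen i.val ((P.get i).W.map ν) ∉ K ∧ ¬ Blocked P K i ((P.get i).W.map ν)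

def EligAtom (P : CProgram S C) (edb : Set (GAtom S C)) (K : Set (FAtom S C))
    (c : FAtom S C) : Prop :=
  ∃ i ν, Elig P edb K i ν ∧ c = FAtom.chosen i.val ((P.get i).W.map ν)

noncomputable def step (P : CProgram S C) (edb : Set (GAtom S C)) (K : Set (FAtom S C)) :
    Set (FAtom S C) :=
  if h : ∃ c, EligAtom P edb K c then insert h.choose K else K

noncomputable def chain (P : CProgram S C) (edb : Set (GAtom S C)) : ℕ → Set (FAtom S C)
  | 0 => ∅
  | n + 1 => step P edb (chain P edb n)

theorem subset_step (P : CProgram S C) (edb : Set (GAtom S C)) (K : Set (FAtom S C)) :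
    K ⊆ step P edb K := by
  unfold step; split
  · exact Set.subset_insert _ _
  · exact subset_rfl

theorem not_elig_of_fix {P : CProgram S C} {edb : Set (GAtom S C)} {K : Set (FAtom S C)}
    (hfix : step P edb K = K) {i : Fin P.length} {ν : ℕ → C} : ¬ Elig P edb K i ν := by
  intro he
  have h : ∃ c, EligAtom P edb K c := ⟨_, i, ν, he, rfl⟩
  rw [step, dif_pos h] at hfix
  obtain ⟨i', ν', he', hc⟩ := h.choose_spec
  have : h.choose ∈ K := by
    have hm := Set.mem_insert h.choose K
    rwa [hfix] at hm
  rw [hc] at this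
  exact he'.2.2.1 this

def ChosenOnly (P : CProgram S C) (K : Set (FAtom S C)) : Prop :=
  ∀ c ∈ K, ∃ i : Fin P.length, ∃ ν : ℕ → C, c = FAtom.chosen i.val ((P.get i).W.map ν)

def KInv (P : CProgram S C) (K : Set (FAtom S C)) : Prop :=
  ∀ i : Fin P.length, ∀ w, FAtom.chosen i.val w ∈ K → ¬ Blocked P K i w

theorem chosenOnly_step {P : CProgram S C} {edb : Set (GAtom S C)} {K : Set (FAtom S C)}
    (h : ChosenOnly P K) : ChosenOnly P (step P edb K) := by
  unfold step; split
  case isTrue h' =>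
    intro c hc
    rcases Set.mem_insert_iff.1 hc with rfl | hc
    · obtain ⟨i, ν, _, hc⟩ := h'.choose_spec
      exact ⟨i, ν, hc⟩
    · exact h c hc
  case isFalse => exact h

theorem inv_step {P : CProgram S C} {edb : Set (GAtom S C)} {K : Set (FAtom S C)}
    (h : KInv P K) : KInv P (step P edb K) := by
  unfold step; split
  case isFalse => exact h
  case isTrue h' =>
    obtain ⟨i0, ν0, he, hc0⟩ := h'.choose_spec
    intro i w hw hbl
    obtain ⟨w', hw', hconf⟩ := hbl
    rcases Set.mem_insert_iff.1 hw with hnew | hold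
    · -- the blocked atom is the new one
      rw [hc0] at hnew
      obtain ⟨h1, h2⟩ := FAtom.chosen.inj hnew
      obtain rfl : i = i0 := Fin.val_injective h1
      subst h2
      rcases Set.mem_insert_iff.1 hw' with hnew' | hold'
      · rw [hc0] at hnew'
        obtain ⟨_, h4⟩ := FAtom.chosen.inj hnew'
        subst h4
        exact Confl.irrefl hconf
      · exact he.2.2.2 ⟨w', hold', hconf⟩
    · -- the blocked atom is old
      rcases Set.mem_insert_iff.1 hw' with hnew' | hold'
      · rw [hc0] at hnew'
        obtain ⟨h1, h2⟩ := FAtom.chosen.inj hnew'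
        obtain rfl : i = i0 := Fin.val_injective h1
        subst h2
        exact he.2.2.2 ⟨w, hold, hconf.symm⟩
      · exact h i w hold ⟨w', hold', hconf⟩

theorem chosenOnly_chain (P : CProgram S C) (edb : Set (GAtom S C)) :
    ∀ n, ChosenOnly P (chain P edb n)
  | 0 => fun c hc => absurd hc (Set.notMem_empty c)
  | n + 1 => chosenOnly_step (chosenOnly_chain P edb n)

theorem inv_chain (P : CProgram S C) (edb : Set (GAtom S C)) : ∀ n, KInv P (chain P edb n)
  | 0 => fun _ _ hc => absurd hc (Set.notMem_empty _)
  | n + 1 => inv_step (inv_chain P edb n)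

theorem chain_mono (P : CProgram S C) (edb : Set (GAtom S C)) {m n : ℕ} (h : m ≤ n) :
    chain P edb m ⊆ chain P edb n := by
  induction n with
  | zero => rw [Nat.le_zero.1 h]
  | succ n ih =>
    rcases Nat.le_succ_iff.1 h with h' | rfl
    · exact (ih h').trans (subset_step P edb _)
    · exact subset_rfl

def RelChosen (P : CProgram S C) : Set (FAtom S C) :=
  {x | ∃ i : Fin P.length, ∃ ν : ℕ → C, x = FAtom.chosen i.val ((P.get i).W.map ν)}

theorem relChosen_finite (P : CProgram S C) [Finite C] : (RelChosen P).Finite := by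
  have hsub : RelChosen P ⊆ ⋃ i : Fin P.length,
      Set.range (fun v : Fin (P.get i).W.length → C => FAtom.chosen i.val (List.ofFn v)) := by
    rintro x ⟨i, ν, rfl⟩
    refine Set.mem_iUnion.2 ⟨i, ⟨ν ∘ (P.get i).W.get, ?_⟩⟩
    show FAtom.chosen i.val (List.ofFn (ν ∘ (P.get i).W.get)) = _
    rw [← List.map_ofFn, List.ofFn_get]
  exact Set.Finite.subset (Set.finite_iUnion (fun i => Set.finite_range _)) hsub

theorem exists_fix (P : CProgram S C) (edb : Set (GAtom S C)) [Finite C] :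
    ∃ n, step P edb (chain P edb n) = chain P edb n := by
  by_contra hno
  push_neg at hno
  have hsub : ∀ n, chain P edb n ⊆ RelChosen P := by
    intro n x hx
    exact chosenOnly_chain P edb n x hx
  have hlt : ∀ n, (chain P edb n).ncard < (chain P edb (n + 1)).ncard := by
    intro n
    refine Set.ncard_lt_ncard ?_ ((relChosen_finite P).subset (hsub (n + 1)))
    exact HasSubset.Subset.ssubset_of_ne (subset_step P edb _) (fun h => hno n h.symm)
  have hle : ∀ n, n ≤ (chain P edb n).ncard := by
    intro n
    induction n with
    | zero => exact Nat.zero_le _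
    | succ n ih => exact Nat.lt_of_le_of_lt ih (hlt n)
  have h1 := hle ((RelChosen P).ncard + 1)
  have h2 := Set.ncard_le_ncard (hsub ((RelChosen P).ncard + 1)) (relChosen_finite P)
  omega

end AuxProof
/-- For every positive choice program `P` (over a finite
universe of constants and predicate symbols, with an extensional database
`edb`), the first-order equivalent `foe(P)` has at least one total stable
model. -/
theorem positive_choice_program_foe_has_total_stable_model
    {S : Schema} {C : Type} [Finite S.pred] [Finite C]
    (P : CProgram S C) (hpos : P.Positive) (edb : Set (GAtom S C)) :
    ∃ M : Set (FAtom S C), IsStableModel (foe P edb) M := by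
  obtain ⟨n₀, hfix⟩ := exists_fix P edb
  have hstab : ∀ k, chain P edb (n₀ + k) = chain P edb n₀ := by
    intro k; induction k with
    | zero => rfl
    | succ k ih => show step P edb (chain P edb (n₀ + k)) = _; rw [ih, hfix]
  have hchainK : ∀ m, chain P edb m ⊆ chain P edb n₀ := by
    intro m
    rcases le_total m n₀ with h | h
    · exact chain_mono P edb h
    · rw [show m = n₀ + (m - n₀) from (Nat.add_sub_cancel' h).symm, hstab]
  have hCO : ChosenOnly P (chain P edb n₀) := chosenOnly_chain P edb n₀
  have hInv : KInv P (chain P edb n₀) := inv_chain P edb n₀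
  -- notation
  set K := chain P edb n₀ with hKdef
  set M := MK P edb K with hMdef
  have hnegB : ∀ i : Fin P.length, ∀ ν : ℕ → C,
      negBody (P.get i) ν = (∅ : Set (FAtom S C)) :=
    fun i ν => negBody_empty (hpos _ (List.get_mem P i)) ν
  have hdiff_not : ∀ (i : Fin P.length) (ν : ℕ → C),
      ¬ Blocked P K i ((P.get i).W.map ν) → FAtom.diff i.val ((P.get i).W.map ν) ∉ M := by
    intro i ν hnb hd
    refine hnb (blocked_of_diff_mem (fun c hc => ?_) hd)
    obtain ⟨j, ν', h⟩ := hCO c hc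
    exact ⟨j, _, h⟩
  have hNmodel : IsModel (reduct (foe P edb) M) (leastModel (reduct (foe P edb) M)) :=
    definite_isModel_least (reduct_definite _ _)
  have hN0 : ∀ r ∈ foe P edb, r.neg = ∅ → r.Sat (leastModel (reduct (foe P edb) M)) :=
    fun r hr hne => hNmodel r (reduct_contains_definite r hr hne)
  -- M satisfies every definite rule of foe
  have hgen : ∀ r' ∈ foe P edb, r'.neg = ∅ → GRule.Sat ⟨r'.head, r'.pos, ∅⟩ M := by
    intro r' hr' hne
    have hr'eq : r' = ⟨r'.head, r'.pos, ∅⟩ := by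
      obtain ⟨h, p, n⟩ := r'; simp only at hne; rw [hne]
    rw [← hr'eq]
    exact MK_isModel P edb K r' (Or.inl ⟨hr', hne⟩)
  -- M is a model of the reduct
  have hMmodRed : IsModel (reduct (foe P edb) M) M := by
    rintro r ⟨r', hr', hnegM, rfl⟩
    rcases hr' with ((((⟨a, ha, rfl⟩ | ⟨i, ν, hcg, rfl⟩) | ⟨i, ν, hcg, rfl⟩) |
        ⟨i, ν, hcg, rfl⟩) | ⟨i, g, hg, ν, ν', h1, h2, rfl⟩)
    · exact hgen _ (Or.inl (Or.inl (Or.inl (Or.inl ⟨a, ha, rfl⟩)))) rfl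
    · exact hgen _ (Or.inl (Or.inl (Or.inl (Or.inr ⟨i, ν, hcg, rfl⟩)))) (hnegB i ν)
    · exact hgen _ (Or.inl (Or.inl (Or.inr ⟨i, ν, hcg, rfl⟩))) (hnegB i ν)
    · -- the chosen rule
      intro hp _
      have hdnotM : FAtom.diff i.val ((P.get i).W.map ν) ∉ M :=
        hnegM _ (Set.mem_insert _ _)
      have hnb : ¬ Blocked P K i ((P.get i).W.map ν) :=
        fun hb => hdnotM (diff_mem_of_blocked hb)
      by_cases hcK : FAtom.chosen i.val ((P.get i).W.map ν) ∈ K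
      · exact K_subset_MK P edb K hcK
      · exact absurd ⟨hcg, hp, hcK, hnb⟩ (not_elig_of_fix hfix)
    · exact hgen _ (Or.inr ⟨i, g, hg, ν, ν', h1, h2, rfl⟩) rfl
  -- every stage of the chain is contained in the least model of the reduct
  have hchainN : ∀ n, chain P edb n ⊆ leastModel (reduct (foe P edb) M) := by
    intro n; induction n with
    | zero => exact fun x hx => absurd hx (Set.notMem_empty x)
    | succ n ih =>
      show step P edb (chain P edb n) ⊆ _
      by_cases h' : ∃ c, EligAtom P edb (chain P edb n) c
      · rw [step, dif_pos h']
        obtain ⟨i, ν, he, hc⟩ := h'.choose_spec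
        have hMKn : MK P edb (chain P edb n) ⊆ leastModel (reduct (foe P edb) M) :=
          leastModel_subset (model_Qprog_of hN0 ih)
        have hcN : h'.choose ∈ leastModel (reduct (foe P edb) M) := by
          rw [hc]
          have hrule4 : (⟨FAtom.chosen i.val ((P.get i).W.map ν), posBody (P.get i) ν,
              insert (FAtom.diff i.val ((P.get i).W.map ν)) (negBody (P.get i) ν)⟩ :
              GRule (FAtom S C)) ∈ foe P edb :=
            Or.inl (Or.inr ⟨i, ν, he.1, rfl⟩)
          have hcKmem : FAtom.chosen i.val ((P.get i).W.map ν) ∈ K := by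
            refine hchainK (n + 1) ?_
            show _ ∈ step P edb (chain P edb n)
            rw [step, dif_pos h', ← hc]
            exact Set.mem_insert _ _
          have hdnot : FAtom.diff i.val ((P.get i).W.map ν) ∉ M :=
            hdiff_not i ν (hInv i _ hcKmem)
          have hred : (⟨FAtom.chosen i.val ((P.get i).W.map ν), posBody (P.get i) ν, ∅⟩ :
              GRule (FAtom S C)) ∈ reduct (foe P edb) M := by
            refine ⟨_, hrule4, ?_, rfl⟩
            intro a ha
            rw [show (⟨FAtom.chosen i.val ((P.get i).W.map ν), posBody (P.get i) ν,
              insert (FAtom.diff i.val ((P.get i).W.map ν)) (negBody (P.get i) ν)⟩ :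
              GRule (FAtom S C)).neg = insert (FAtom.diff i.val ((P.get i).W.map ν))
              (negBody (P.get i) ν) from rfl, hnegB i ν] at ha
            rcases Set.mem_insert_iff.1 ha with rfl | ha
            · exact hdnot
            · exact absurd ha (Set.notMem_empty a)
          exact hNmodel _ hred (fun x hx => hMKn (he.2.1 hx))
            (fun a ha => absurd ha (Set.notMem_empty a))
        exact Set.insert_subset hcN ih
      · rw [step, dif_neg h']; exact ih
  have hMN : M ⊆ leastModel (reduct (foe P edb) M) :=
    leastModel_subset (model_Qprog_of hN0 (hchainN n₀))
  exact ⟨M, Set.Subset.antisymm hMN (leastModel_subset hMmodRed)⟩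
end

section
/- For every positive choice program P and every total stable model M of foe(P), the set of chosen_r atoms in M satisfies, for each choice goal choice((Xi),(Yi)) of each rule r, the functional dependency Xi → Yi (i.e., no two chosen_r atoms in M agree on the Xi-arguments but differ on the Yi-arguments). -/
/-- In every total stable model `M` of `foe(P)` of a positive
choice program `P`, the `chosen_r` atoms obey the functional dependency
`Xᵢ → Yᵢ` of every choice goal `choice((Xᵢ),(Yᵢ))` of every rule `r`: two
`chosen_r` tuples (instantiations `W.map ν`, `W.map ν'` of the variable list
`W`) that agree on the `Xᵢ`-arguments also agree on the `Yᵢ`-arguments. -/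
theorem choice_stable_model_satisfies_FDs
    {S : Schema} {C : Type} [Finite S.pred] [Finite C]
    (P : CProgram S C) (hpos : P.Positive) (edb : Set (GAtom S C))
    (M : Set (FAtom S C)) (hM : IsStableModel (foe P edb) M) :
    ∀ i : Fin P.length, ∀ g ∈ (P.get i).cgoals, ∀ ν ν' : ℕ → C,
      FAtom.chosen i ((P.get i).W.map ν) ∈ M →
      FAtom.chosen i ((P.get i).W.map ν') ∈ M →
      (∀ v ∈ g.1, ν v = ν' v) → ∀ v ∈ g.2, ν v = ν' v := by

  intro i g hg ν ν' hν hν' hX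
  by_contra h
  push_neg at h
  obtain ⟨v, hv, hvne⟩ := h
  set R := reduct (foe P edb) M with hR
  -- M is a model of the reduct
  have hmodel : IsModel R M := by
    rw [hM]
    rintro r ⟨r', hr', hneg, rfl⟩ hpos -
    intro N hN
    exact hN _ ⟨r', hr', hneg, rfl⟩
      (hpos.trans (Set.sInter_subset_of_mem hN)) (by simp)
  -- the diff rule and its reduct
  have hdiffrule : (⟨FAtom.diff i ((P.get i).W.map ν),
      {FAtom.chosen i ((P.get i).W.map ν')}, ∅⟩ : GRule (FAtom S C)) ∈ foe P edb :=
    Or.inr ⟨i, g, hg, ν, ν', hX, ⟨v, hv, hvne⟩, rfl⟩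
  have hdiff : FAtom.diff i ((P.get i).W.map ν) ∈ M := by
    refine hmodel _ ⟨_, hdiffrule, by simp, rfl⟩ ?_ (by simp)
    simpa using hν'
  -- M minus the chosen atom is also a model of the reduct
  set c : FAtom S C := FAtom.chosen i ((P.get i).W.map ν) with hc
  have hNmodel : IsModel R (M \ {c}) := by
    rintro r ⟨r', hr', hneg, rfl⟩ hpos -
    have hheadM : r'.head ∈ M := by
      refine hmodel ⟨r'.head, r'.pos, ∅⟩ ⟨r', hr', hneg, rfl⟩ ?_ (by simp)
      exact hpos.trans Set.diff_subset
    refine ⟨hheadM, ?_⟩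
    simp only [Set.mem_singleton_iff]
    intro hhead
    -- analyze which rule of foe has head c
    rcases hr' with ((((⟨a, _, ha⟩ | ⟨j, μ, _, hrr⟩) | ⟨j, μ, _, hrr⟩) | ⟨j, μ, hjne, hrr⟩) | ⟨j, g', _, μ, μ', _, _, hrr⟩)
    · rw [ha] at hhead; simp at hhead
    · rw [hrr] at hhead; simp at hhead
    · rw [hrr] at hhead; simp at hhead
    · -- chosen rule: its negative body contains the diff atom, which is in M
      rw [hrr] at hhead hneg
      simp only [hc, FAtom.chosen.injEq] at hhead
      obtain ⟨hij, hw⟩ := hhead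
      have hji : j = i := Fin.ext hij
      subst hji
      rw [hw] at hneg
      exact hneg _ (Set.mem_insert _ _) hdiff
    · rw [hrr] at hhead; simp [hc] at hhead
  -- least model is contained in M \ {c}, contradicting c ∈ M
  have hsub : M ⊆ M \ {c} := by
    nth_rewrite 1 [hM]
    exact Set.sInter_subset_of_mem hNmodel
  exact (hsub hν).2 rfl
end

section
/- There exists a positive choice program P (for instance the advisor-selection program actual_adv(S,P) ← student(S,Majr,Yr), professor(P,Majr), choice((S),(P)) over a database in which some student's major matches at least two professors) such that the first-order equivalent foe(P) has no total well-founded model: the well-founded model leaves the chosen atoms undefined, while foe(P) has multiple total stable models. -/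
/-! ## The well-founded model via the alternating fixpoint -/

/-- The Gelfond–Lifschitz operator: the least model of the reduct. -/
def gamma {α : Type} (P : GProgram α) (M : Set α) : Set α := leastModel (reduct P M)

theorem reduct_antitone {α : Type} (P : GProgram α) {M M' : Set α} (h : M ⊆ M') :
    reduct P M' ⊆ reduct P M := by
  rintro r ⟨r', hr', hneg, rfl⟩
  exact ⟨r', hr', fun a ha hm => hneg a ha (h hm), rfl⟩

theorem gamma_antitone {α : Type} (P : GProgram α) : Antitone (gamma P) := by
  intro M M' h
  apply Set.sInter_subset_sInter
  intro N hN r hr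
  exact hN r (reduct_antitone P h hr)

/-- The squared (hence monotone) Gelfond–Lifschitz operator. -/
def gammaSq {α : Type} (P : GProgram α) : Set α →o Set α :=
  ⟨fun M => gamma P (gamma P M), fun _ _ h => gamma_antitone P (gamma_antitone P h)⟩

/-- The atoms true in the well-founded model. -/
def wfTrue {α : Type} (P : GProgram α) : Set α := OrderHom.lfp (gammaSq P)

/-- The atoms true or undefined in the well-founded model. -/
def wfNotFalse {α : Type} (P : GProgram α) : Set α := OrderHom.gfp (gammaSq P)

/-- The well-founded model is total: every atom is either true or false. -/
def WFTotal {α : Type} (P : GProgram α) : Prop := wfTrue P = wfNotFalse P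

/-- The atom `a` is undefined in the well-founded model of `P`. -/
def WFUndefined {α : Type} (P : GProgram α) (a : α) : Prop :=
  a ∈ wfNotFalse P ∧ a ∉ wfTrue P

/-! ## The advisor-selection choice program -/

inductive AdvPred : Type where
  | student | professor | actual_adv
  deriving DecidableEq

def advAr : AdvPred → ℕ
  | .student => 3
  | .professor => 2
  | .actual_adv => 2

def advSchema : Schema := ⟨AdvPred, advAr⟩

/-- `actual_adv(S,P) ← student(S,Majr,Yr), professor(P,Majr), choice((S),(P))`
with variables `S = 0`, `P = 1`, `Majr = 2`, `Yr = 3`. -/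
def advRule (C : Type) : CRule advSchema C where
  head := ⟨AdvPred.actual_adv, ![Term.var 0, Term.var 1]⟩
  pos := [⟨AdvPred.student, ![Term.var 0, Term.var 2, Term.var 3]⟩,
          ⟨AdvPred.professor, ![Term.var 1, Term.var 2]⟩]
  neg := []
  cgoals := [([0], [1])]
  cgoals_disjoint := by decide
  cgoals_right_ne := by decide

def advProg (C : Type) : CProgram advSchema C := [advRule C]

namespace AdvAux

variable {C : Type}

theorem ground_student (ν : ℕ → C) :
    (⟨AdvPred.student, ![Term.var 0, Term.var 2, Term.var 3]⟩ : Atom advSchema C).ground ν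
      = ⟨AdvPred.student, ![ν 0, ν 2, ν 3]⟩ := by
  show (⟨AdvPred.student, _⟩ : GAtom advSchema C) = _
  congr 1; funext i; fin_cases i <;> rfl

theorem ground_prof (ν : ℕ → C) :
    (⟨AdvPred.professor, ![Term.var 1, Term.var 2]⟩ : Atom advSchema C).ground ν
      = ⟨AdvPred.professor, ![ν 1, ν 2]⟩ := by
  show (⟨AdvPred.professor, _⟩ : GAtom advSchema C) = _
  congr 1; funext i; fin_cases i <;> rfl

theorem head_eq (ν : ℕ → C) :
    (advRule C).head.ground ν = ⟨AdvPred.actual_adv, ![ν 0, ν 1]⟩ := by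
  show (⟨AdvPred.actual_adv, _⟩ : GAtom advSchema C) = _
  congr 1; funext i; fin_cases i <;> rfl

theorem posBody_eq (ν : ℕ → C) : posBody (advRule C) ν =
    {FAtom.base ⟨AdvPred.student, ![ν 0, ν 2, ν 3]⟩,
     FAtom.base ⟨AdvPred.professor, ![ν 1, ν 2]⟩} := by
  unfold posBody advRule
  ext x
  simp only [Set.mem_setOf_eq, List.mem_cons, List.not_mem_nil, or_false,
    Set.mem_insert_iff, Set.mem_singleton_iff]
  constructor
  · rintro ⟨a, (rfl|rfl), rfl⟩
    · exact Or.inl (by rw [ground_student])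
    · exact Or.inr (by rw [ground_prof])
  · rintro (rfl|rfl)
    · exact ⟨_, Or.inl rfl, by rw [ground_student]⟩
    · exact ⟨_, Or.inr rfl, by rw [ground_prof]⟩

theorem negBody_eq (ν : ℕ → C) : negBody (advRule C) ν = ∅ := by
  unfold negBody advRule; simp

theorem get_adv (i : Fin (advProg C).length) : (advProg C).get i = advRule C :=
  match i with | ⟨0, _⟩ => rfl

variable (edb : Set (GAtom advSchema C))

/-- the "some professor matches student `a`'s major" relation. -/
def Rel (a b : C) : Prop :=
  ∃ m y, (⟨AdvPred.student, ![a, m, y]⟩ : GAtom advSchema C) ∈ edb ∧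
         (⟨AdvPred.professor, ![b, m]⟩ : GAtom advSchema C) ∈ edb

def Dom (a : C) : Prop := ∃ b, Rel edb a b

/-- the intended stable model determined by an advisor-choice function `f`. -/
def Mdl (f : C → C) : Set (FAtom advSchema C) :=
  {x | ∃ a ∈ edb, x = FAtom.base a} ∪
  {x | ∃ a, Dom edb a ∧ x = FAtom.chosen 0 [a, f a]} ∪
  {x | ∃ a b, Dom edb a ∧ b ≠ f a ∧ x = FAtom.diff 0 [a, b]} ∪
  {x | ∃ a, Dom edb a ∧ x = FAtom.base ⟨AdvPred.actual_adv, ![a, f a]⟩}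

theorem chosen_inv {f : C → C} {r : ℕ} {w : List C}
    (h : FAtom.chosen r w ∈ Mdl edb f) : ∃ a, Dom edb a ∧ w = [a, f a] := by
  rcases h with (((⟨a, _, he⟩ | ⟨a, hd, he⟩) | ⟨a, b, _, _, he⟩) | ⟨a, _, he⟩)
  · cases he
  · injection he with _ h2; exact ⟨a, hd, h2⟩
  · cases he
  · cases he

theorem diff_inv {f : C → C} {r : ℕ} {w : List C}
    (h : FAtom.diff r w ∈ Mdl edb f) : ∃ a b, Dom edb a ∧ b ≠ f a ∧ w = [a, b] := by
  rcases h with (((⟨a, _, he⟩ | ⟨a, hd, he⟩) | ⟨a, b, hd, hb, he⟩) | ⟨a, _, he⟩)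
  · cases he
  · cases he
  · injection he with _ h2; exact ⟨a, b, hd, hb, h2⟩
  · cases he

theorem base_inv {f : C → C} {g : GAtom advSchema C}
    (h : FAtom.base g ∈ Mdl edb f) (hp : g.p ≠ AdvPred.actual_adv) : g ∈ edb := by
  rcases h with (((⟨a, ha, he⟩ | ⟨a, hd, he⟩) | ⟨a, b, _, _, he⟩) | ⟨a, _, he⟩)
  · injection he with h2; exact h2 ▸ ha
  · cases he
  · cases he
  · injection he with h2
    exact absurd (congrArg GAtom.p h2) hp

theorem diff_self_not_mem {f : C → C} {a : C} :
    FAtom.diff 0 [a, f a] ∉ Mdl edb f := by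
  intro h
  obtain ⟨a', b', _, hb, he⟩ := diff_inv edb h
  simp only [List.cons.injEq, and_true] at he
  obtain ⟨rfl, rfl⟩ := he
  exact hb rfl

/-- a canonical valuation -/
def nu (a b m y : C) : ℕ → C := fun n =>
  if n = 0 then a else if n = 1 then b else if n = 2 then m else y

theorem posBody_subset {ν : ℕ → C} {X : Set (FAtom advSchema C)}
    (h1 : FAtom.base ⟨AdvPred.student, ![ν 0, ν 2, ν 3]⟩ ∈ X)
    (h2 : FAtom.base ⟨AdvPred.professor, ![ν 1, ν 2]⟩ ∈ X) :
    posBody (advRule C) ν ⊆ X := by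
  rw [posBody_eq]
  rintro x (rfl | rfl)
  · exact h1
  · exact h2

end AdvAux

namespace AdvAux

variable {C : Type} (edb : Set (GAtom advSchema C))

theorem Mdl_stable (f : C → C) (hf : ∀ a, Dom edb a → Rel edb a (f a)) :
    IsStableModel (foe (advProg C) edb) (Mdl edb f) := by
  set P := foe (advProg C) edb with hP
  set M := Mdl edb f with hM
  -- every model of the reduct contains M
  have hfix : ∀ N, IsModel (reduct P M) N → M ⊆ N := by
    intro N hN
    have hbase : ∀ g ∈ edb, FAtom.base g ∈ N := by
      intro g hg
      have hrule : (⟨FAtom.base g, ∅, ∅⟩ : GRule (FAtom advSchema C)) ∈ reduct P M :=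
        ⟨⟨FAtom.base g, ∅, ∅⟩,
          Or.inl (Or.inl (Or.inl (Or.inl ⟨g, hg, rfl⟩))),
          fun a ha => absurd ha (Set.notMem_empty a), rfl⟩
      exact hN _ hrule (Set.empty_subset N) (fun a ha => absurd ha (Set.notMem_empty a))
    have hchosen : ∀ a, Dom edb a → FAtom.chosen 0 [a, f a] ∈ N := by
      intro a ha
      obtain ⟨m', y', hsm, hpm⟩ := hf a ha
      set ν := nu a (f a) m' y' with hν
      have hrule' : (⟨FAtom.chosen 0 [a, f a], posBody (advRule C) ν,
          insert (FAtom.diff 0 [a, f a]) (negBody (advRule C) ν)⟩ :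
            GRule (FAtom advSchema C)) ∈ P :=
        Or.inl (Or.inr ⟨⟨0, Nat.one_pos⟩, ν, fun h => List.cons_ne_nil _ _ h, rfl⟩)
      have hrule : (⟨FAtom.chosen 0 [a, f a], posBody (advRule C) ν, ∅⟩ :
          GRule (FAtom advSchema C)) ∈ reduct P M := by
        refine ⟨_, hrule', ?_, rfl⟩
        intro x hx
        rw [negBody_eq] at hx
        rcases hx with rfl | hx
        · exact diff_self_not_mem edb
        · exact absurd hx (Set.notMem_empty x)
      refine hN _ hrule ?_ (fun a ha => absurd ha (Set.notMem_empty a))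
      exact posBody_subset (hbase _ hsm) (hbase _ hpm)
    have hdiff : ∀ a b, Dom edb a → b ≠ f a → FAtom.diff 0 [a, b] ∈ N := by
      intro a b ha hb
      have hrule' : (⟨FAtom.diff 0 [a, b], {FAtom.chosen 0 [a, f a]}, ∅⟩ :
          GRule (FAtom advSchema C)) ∈ P := by
        refine Or.inr ⟨⟨0, Nat.one_pos⟩, ([0], [1]), List.mem_cons_self,
          nu a b b b, nu a (f a) b b, ?_, ⟨1, List.mem_cons_self, hb⟩, rfl⟩
        intro v hv
        have hv0 : v = 0 := by simpa using hv
        subst hv0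
        rfl
      have hrule : (⟨FAtom.diff 0 [a, b], {FAtom.chosen 0 [a, f a]}, ∅⟩ :
          GRule (FAtom advSchema C)) ∈ reduct P M :=
        ⟨_, hrule', fun x hx => absurd hx (Set.notMem_empty x), rfl⟩
      refine hN _ hrule ?_ (fun a ha => absurd ha (Set.notMem_empty a))
      exact Set.singleton_subset_iff.2 (hchosen a ha)
    have hadv : ∀ a, Dom edb a →
        FAtom.base ⟨AdvPred.actual_adv, ![a, f a]⟩ ∈ N := by
      intro a ha
      obtain ⟨m', y', hsm, hpm⟩ := hf a ha
      set ν := nu a (f a) m' y' with hν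
      have hrule' : (⟨FAtom.base ((advRule C).head.ground ν),
          insert (FAtom.chosen 0 [a, f a]) (posBody (advRule C) ν),
          negBody (advRule C) ν⟩ : GRule (FAtom advSchema C)) ∈ P :=
        Or.inl (Or.inl (Or.inr ⟨⟨0, Nat.one_pos⟩, ν, fun h => List.cons_ne_nil _ _ h, rfl⟩))
      have hrule : (⟨FAtom.base ((advRule C).head.ground ν),
          insert (FAtom.chosen 0 [a, f a]) (posBody (advRule C) ν), ∅⟩ :
          GRule (FAtom advSchema C)) ∈ reduct P M := by
        refine ⟨_, hrule', ?_, rfl⟩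
        intro x hx
        rw [negBody_eq] at hx
        exact absurd hx (Set.notMem_empty x)
      have hmem := hN _ hrule (by
          intro x hx
          rcases hx with rfl | hx
          · exact hchosen a ha
          · exact posBody_subset (hbase _ hsm) (hbase _ hpm) hx)
        (fun a ha => absurd ha (Set.notMem_empty a))
      rwa [head_eq] at hmem
    rintro x ((((⟨g, hg, rfl⟩ | ⟨a, ha, rfl⟩) | ⟨a, b, ha, hb, rfl⟩) | ⟨a, ha, rfl⟩))
    · exact hbase g hg
    · exact hchosen a ha
    · exact hdiff a b ha hb
    · exact hadv a ha
  -- M is itself a model of the reduct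
  have hmodel : IsModel (reduct P M) M := by
    rintro r ⟨r', hr', hneg, rfl⟩
    rcases hr' with ((((⟨g, hg, rfl⟩ | ⟨i, ν, hc, rfl⟩) | ⟨⟨iv, hlt⟩, ν, hc, rfl⟩)
        | ⟨⟨iv, hlt⟩, ν, hc, rfl⟩) | ⟨⟨iv, hlt⟩, g, hg, ν, ν', hx, hy, rfl⟩)
    · -- edb fact
      intro _ _
      exact Or.inl (Or.inl (Or.inl ⟨g, hg, rfl⟩))
    · -- no-choice rules: impossible
      rw [get_adv] at hc
      exact absurd hc (by simp [advRule])
    · -- modified original rule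
      obtain rfl := Nat.lt_one_iff.mp hlt
      intro hpos _
      have hch : FAtom.chosen 0 [ν 0, ν 1] ∈ M := hpos (Set.mem_insert _ _)
      obtain ⟨a, ha, he⟩ := chosen_inv edb hch
      replace he : [ν 0, ν 1] = [a, f a] := he
      simp only [List.cons.injEq, and_true] at he
      obtain ⟨h0, h1⟩ := he
      subst h0
      show FAtom.base ((advRule C).head.ground ν) ∈ M
      rw [head_eq, h1]
      exact Or.inr ⟨ν 0, ha, rfl⟩
    · -- chosen rule
      obtain rfl := Nat.lt_one_iff.mp hlt
      intro hpos _
      replace hpos : posBody (advRule C) ν ⊆ M := hpos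
      have hst : FAtom.base ⟨AdvPred.student, ![ν 0, ν 2, ν 3]⟩ ∈ M :=
        hpos (by rw [posBody_eq]; exact Or.inl rfl)
      have hpr : FAtom.base ⟨AdvPred.professor, ![ν 1, ν 2]⟩ ∈ M :=
        hpos (by rw [posBody_eq]; exact Or.inr rfl)
      have hst' := base_inv edb hst (by intro h; cases h)
      have hpr' := base_inv edb hpr (by intro h; cases h)
      have hdom : Dom edb (ν 0) := ⟨ν 1, ν 2, ν 3, hst', hpr'⟩
      have hnd : FAtom.diff 0 [ν 0, ν 1] ∉ M := hneg _ (Set.mem_insert _ _)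
      have h1 : ν 1 = f (ν 0) := by
        by_contra hcon
        exact hnd (Or.inl (Or.inr ⟨ν 0, ν 1, hdom, hcon, rfl⟩))
      show FAtom.chosen 0 [ν 0, ν 1] ∈ M
      rw [h1]
      exact Or.inl (Or.inl (Or.inr ⟨ν 0, hdom, rfl⟩))
    · -- diffChoice rule
      obtain rfl := Nat.lt_one_iff.mp hlt
      rw [get_adv] at hg
      simp only [advRule, List.mem_cons, List.not_mem_nil, or_false] at hg
      subst hg
      intro hpos _
      have hch : FAtom.chosen 0 [ν' 0, ν' 1] ∈ M :=
        hpos (Set.mem_singleton _)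
      obtain ⟨a, ha, he⟩ := chosen_inv edb hch
      replace he : [ν' 0, ν' 1] = [a, f a] := he
      simp only [List.cons.injEq, and_true] at he
      obtain ⟨h0, h1⟩ := he
      have hx0 : ν 0 = ν' 0 := hx 0 (List.mem_cons_self)
      obtain ⟨v, hv, hvne⟩ := hy
      simp only [List.mem_cons, List.not_mem_nil, or_false] at hv
      subst hv
      show FAtom.diff 0 [ν 0, ν 1] ∈ M
      refine Or.inl (Or.inr ⟨ν 0, ν 1, ?_, ?_, rfl⟩)
      · rw [hx0, h0]; exact ha
      · rw [hx0, h0]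
        intro hcon
        exact hvne (hcon.trans h1.symm)
  apply Set.Subset.antisymm
  · exact fun x hx => Set.mem_sInter.2 fun N hN => hfix N hN hx
  · exact Set.sInter_subset_of_mem hmodel

end AdvAux

/-- The advisor-selection program is a positive choice
program whose first-order equivalent (over a database where student `s`'s
major `m` matches the two distinct professors `p₁ ≠ p₂`) has no total
well-founded model; the well-founded model leaves the `chosen` atoms
undefined, while the first-order equivalent has (at least) two distinct total
stable models. -/
theorem advisor_foe_has_no_total_wellfounded_model
    {C : Type} [Finite C] (edb : Set (GAtom advSchema C))
    (s m y p₁ p₂ : C) (hne : p₁ ≠ p₂)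
    (hs : (⟨AdvPred.student, ![s, m, y]⟩ : GAtom advSchema C) ∈ edb)
    (h1 : (⟨AdvPred.professor, ![p₁, m]⟩ : GAtom advSchema C) ∈ edb)
    (h2 : (⟨AdvPred.professor, ![p₂, m]⟩ : GAtom advSchema C) ∈ edb) :
    (advProg C).Positive ∧
    ¬ WFTotal (foe (advProg C) edb) ∧
    WFUndefined (foe (advProg C) edb) (FAtom.chosen 0 [s, p₁]) ∧
    WFUndefined (foe (advProg C) edb) (FAtom.chosen 0 [s, p₂]) ∧
    ∃ M₁ M₂ : Set (FAtom advSchema C),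
      IsStableModel (foe (advProg C) edb) M₁ ∧
      IsStableModel (foe (advProg C) edb) M₂ ∧ M₁ ≠ M₂ := by
  classical
  have hrel1 : AdvAux.Rel edb s p₁ := ⟨m, y, hs, h1⟩
  have hrel2 : AdvAux.Rel edb s p₂ := ⟨m, y, hs, h2⟩
  have hdoms : AdvAux.Dom edb s := ⟨p₁, hrel1⟩
  set f₁ : C → C := fun a =>
    if a = s then p₁ else if h : AdvAux.Dom edb a then h.choose else p₁ with hf₁def
  set f₂ : C → C := fun a =>
    if a = s then p₂ else if h : AdvAux.Dom edb a then h.choose else p₂ with hf₂def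
  have hf₁s : f₁ s = p₁ := by simp [hf₁def]
  have hf₂s : f₂ s = p₂ := by simp [hf₂def]
  have hf₁ : ∀ a, AdvAux.Dom edb a → AdvAux.Rel edb a (f₁ a) := by
    intro a ha
    by_cases hx : a = s
    · subst hx; rw [hf₁s]; exact hrel1
    · rw [hf₁def]; simp only [if_neg hx, dif_pos ha]; exact ha.choose_spec
  have hf₂ : ∀ a, AdvAux.Dom edb a → AdvAux.Rel edb a (f₂ a) := by
    intro a ha
    by_cases hx : a = s
    · subst hx; rw [hf₂s]; exact hrel2
    · rw [hf₂def]; simp only [if_neg hx, dif_pos ha]; exact ha.choose_spec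
  set P := foe (advProg C) edb with hPdef
  set M₁ := AdvAux.Mdl edb f₁ with hM₁def
  set M₂ := AdvAux.Mdl edb f₂ with hM₂def
  have hst₁ : IsStableModel P M₁ := AdvAux.Mdl_stable edb f₁ hf₁
  have hst₂ : IsStableModel P M₂ := AdvAux.Mdl_stable edb f₂ hf₂
  have hmem₁ : FAtom.chosen 0 [s, p₁] ∈ M₁ :=
    Or.inl (Or.inl (Or.inr ⟨s, hdoms, by rw [hf₁s]⟩))
  have hmem₂ : FAtom.chosen 0 [s, p₂] ∈ M₂ :=
    Or.inl (Or.inl (Or.inr ⟨s, hdoms, by rw [hf₂s]⟩))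
  have hnot₁ : FAtom.chosen 0 [s, p₂] ∉ M₁ := by
    intro h
    obtain ⟨a, ha, he⟩ := AdvAux.chosen_inv edb h
    simp only [List.cons.injEq, and_true] at he
    obtain ⟨rfl, he2⟩ := he
    exact hne (he2.trans hf₁s).symm
  have hnot₂ : FAtom.chosen 0 [s, p₁] ∉ M₂ := by
    intro h
    obtain ⟨a, ha, he⟩ := AdvAux.chosen_inv edb h
    simp only [List.cons.injEq, and_true] at he
    obtain ⟨rfl, he2⟩ := he
    exact hne (he2.trans hf₂s)
  have hg₁ : gamma P M₁ = M₁ := hst₁.symm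
  have hg₂ : gamma P M₂ = M₂ := hst₂.symm
  have hgSq₁ : (gammaSq P) M₁ = M₁ := by
    show gamma P (gamma P M₁) = M₁
    rw [hg₁, hg₁]
  have hgSq₂ : (gammaSq P) M₂ = M₂ := by
    show gamma P (gamma P M₂) = M₂
    rw [hg₂, hg₂]
  have hsub₁ : M₁ ⊆ wfNotFalse P := OrderHom.le_gfp (gammaSq P) hgSq₁.ge
  have hsub₂ : M₂ ⊆ wfNotFalse P := OrderHom.le_gfp (gammaSq P) hgSq₂.ge
  have hlfp₁ : wfTrue P ⊆ M₁ := OrderHom.lfp_le (gammaSq P) hgSq₁.le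
  have hlfp₂ : wfTrue P ⊆ M₂ := OrderHom.lfp_le (gammaSq P) hgSq₂.le
  have hund₁ : WFUndefined P (FAtom.chosen 0 [s, p₁]) :=
    ⟨hsub₁ hmem₁, fun h => hnot₂ (hlfp₂ h)⟩
  have hund₂ : WFUndefined P (FAtom.chosen 0 [s, p₂]) :=
    ⟨hsub₂ hmem₂, fun h => hnot₁ (hlfp₁ h)⟩
  refine ⟨?_, ?_, hund₁, hund₂, M₁, M₂, hst₁, hst₂, ?_⟩
  · intro r hr
    have hr' : r = advRule C := by simpa [advProg] using hr
    subst hr'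
    rfl
  · intro htot
    exact hund₁.2 (htot ▸ hund₁.1)
  · intro h
    exact hnot₂ (h ▸ hmem₁)
end

section
/- For the rooted spanning-tree choice program—st(root,a); st(X,Y) ← st(_,X), g(X,Y), Y ≠ a, Y ≠ X, choice((Y),(X))—over any finite undirected graph g (each edge represented by both ordered pairs) in which every node is connected to the source node a, the st atoms of every choice model form a spanning tree of the graph rooted at a, and every nondeterministic query of this form is inexpressible in standard (deterministic) stratified Datalog. -/
/-- `σ` is a stratification of the program `P` (choice goals ignored). -/
def StratifiedBy {S : Schema} {C : Type} (P : CProgram S C) (σ : S.pred → ℕ) : Prop :=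
  ∀ r ∈ P, (∀ a ∈ r.pos, σ a.p ≤ σ r.head.p) ∧ (∀ a ∈ r.neg, σ a.p < σ r.head.p)

/-- `T` is a spanning tree, rooted at `a`, of the undirected graph with edge
set `E`: a set of directed edges of the graph in which every non-source node
of the graph has exactly one parent, no edge enters the source `a`, and every
node of the graph is reachable from `a`. -/
def IsSpanningTree {C : Type} (E : Set (C × C)) (a : C) (T : Set (C × C)) : Prop :=
  T ⊆ E ∧
  (∀ p ∈ T, p.2 ≠ a) ∧
  (∀ y : C, (∃ z, (y, z) ∈ E) → y ≠ a → ∃! x, (x, y) ∈ T) ∧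
  (∀ y : C, (∃ z, (y, z) ∈ E) →
    Relation.ReflTransGen (fun u v => (u, v) ∈ T) a y)

/-- Ground atoms of (the first-order equivalent of) the spanning-tree
program. -/
inductive StAtom (C : Type) : Type where
  | g (x y : C)
  | st (x y : C)
  | chosen (x y : C)
  | diff (x y : C)

/-- The ground first-order equivalent of the rooted spanning-tree choice
program on the graph `E` (in the `chosen`/`diffChoice` atoms, the first
argument is the value of `X` and the second that of `Y`; the choice goal
`choice((Y),(X))` yields the `diffChoice` rule below). -/
def stProg {C : Type} (root a : C) (E : Set (C × C)) : GProgram (StAtom C) :=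
  -- database facts g(x,y)
  {r | ∃ p ∈ E, r = ⟨.g p.1 p.2, ∅, ∅⟩} ∪
  -- st(root,a).
  {(⟨.st root a, ∅, ∅⟩ : GRule (StAtom C))} ∪
  -- st(X,Y) ← st(Z,X), g(X,Y), Y ≠ a, Y ≠ X, chosen(X,Y).
  {r | ∃ x y z, y ≠ a ∧ y ≠ x ∧
        r = ⟨.st x y, {.st z x, .g x y, .chosen x y}, ∅⟩} ∪
  -- chosen(X,Y) ← st(Z,X), g(X,Y), Y ≠ a, Y ≠ X, ¬diffChoice(X,Y).
  {r | ∃ x y z, y ≠ a ∧ y ≠ x ∧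
        r = ⟨.chosen x y, {.st z x, .g x y}, {.diff x y}⟩} ∪
  -- diffChoice(X,Y) ← chosen(X',Y), X ≠ X'.   [from choice((Y),(X))]
  {r | ∃ x x' y, x ≠ x' ∧ r = ⟨.diff x y, {.chosen x' y}, ∅⟩}

section Aux
open Classical

variable {α : Type}

lemma reduct_neg_empty {P : GProgram α} {M : Set α} {r : GRule α} (hr : r ∈ reduct P M) :
    r.neg = ∅ := by
  obtain ⟨r', _, _, rfl⟩ := hr; rfl

lemma isModel_leastModel_of_negfree {P : GProgram α} (h : ∀ r ∈ P, r.neg = ∅) :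
    IsModel P (leastModel P) := by
  intro r hr hpos _
  intro N hN
  exact hN r hr (hpos.trans (Set.sInter_subset_of_mem hN)) (by simp [h r hr])

lemma isModel_leastModel_reduct (P : GProgram α) (M : Set α) :
    IsModel (reduct P M) (leastModel (reduct P M)) :=
  isModel_leastModel_of_negfree (fun _ hr => reduct_neg_empty hr)

lemma IsStableModel.isModel_reduct {P : GProgram α} {M : Set α} (h : IsStableModel P M) :
    IsModel (reduct P M) M := by
  have h2 := isModel_leastModel_of_negfree (P := reduct P M) (fun _ hr => reduct_neg_empty hr)
  rwa [← h] at h2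

lemma IsStableModel.subset_of_model {P : GProgram α} {M N : Set α} (h : IsStableModel P M)
    (hN : IsModel (reduct P M) N) : M ⊆ N := by
  rw [h]; exact Set.sInter_subset_of_mem hN

lemma IsStableModel.isModel {P : GProgram α} {M : Set α} (h : IsStableModel P M) :
    IsModel P M := by
  intro r hr hpos hneg
  exact h.isModel_reduct ⟨r.head, r.pos, ∅⟩ ⟨r, hr, hneg, rfl⟩ hpos (by simp)

/-- Stratified ground programs have at most one stable model. -/
lemma stratified_unique {P : GProgram α} (f : α → ℕ)
    (hstrat : ∀ r ∈ P, (∀ x ∈ r.pos, f x ≤ f r.head) ∧ (∀ x ∈ r.neg, f x < f r.head))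
    {M N : Set α} (hM : IsStableModel P M) (hN : IsStableModel P N) : M = N := by
  have onedir : ∀ (A B : Set α), IsStableModel P A → IsStableModel P B →
      ∀ n : ℕ, (∀ x, f x < n → (x ∈ A ↔ x ∈ B)) → ∀ x ∈ A, f x ≤ n → x ∈ B := by
    intro A B hA hB n ih x hxA hfx
    have hK : IsModel (reduct P A) {y | y ∈ A ∧ (f y ≤ n → y ∈ B)} := by
      rintro r ⟨r', hr', hneg, rfl⟩ hpos -
      have hheadA : r'.head ∈ A :=
        hA.isModel_reduct ⟨r'.head, r'.pos, ∅⟩ ⟨r', hr', hneg, rfl⟩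
          (fun y hy => (hpos hy).1) (by simp)
      refine ⟨hheadA, fun hle => ?_⟩
      have hnegB : ∀ y ∈ r'.neg, y ∉ B := by
        intro y hy hyB
        exact hneg y hy (((ih y (lt_of_lt_of_le ((hstrat r' hr').2 y hy) hle)).2) hyB)
      have hposB : r'.pos ⊆ B := by
        intro y hy
        exact (hpos hy).2 (le_trans ((hstrat r' hr').1 y hy) hle)
      exact hB.isModel_reduct ⟨r'.head, r'.pos, ∅⟩ ⟨r', hr', hnegB, rfl⟩ hposB (by simp)
    exact (hA.subset_of_model hK hxA).2 hfx
  have main : ∀ n, ∀ x, f x < n → (x ∈ M ↔ x ∈ N) := by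
    intro n
    induction n using Nat.strong_induction_on with
    | _ n ih =>
      intro x hx
      have ihx : ∀ y, f y < f x → (y ∈ M ↔ y ∈ N) := fun y hy => ih (f x) hx y hy
      constructor
      · intro h; exact onedir M N hM hN (f x) ihx x h le_rfl
      · intro h; exact onedir N M hN hM (f x) (fun y hy => (ihx y hy).symm) x h le_rfl
  ext x
  exact main (f x + 1) x (Nat.lt_succ_self _)

/-! ### Transport of stable models along a bijection of atoms -/

def mapRule (e : α ≃ α) (r : GRule α) : GRule α := ⟨e r.head, e '' r.pos, e '' r.neg⟩

lemma mem_image_equiv' {e : α ≃ α} {s : Set α} {x : α} : x ∈ e '' s ↔ e.symm x ∈ s := by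
  constructor
  · rintro ⟨y, hy, rfl⟩; simpa using hy
  · intro h; exact ⟨e.symm x, h, by simp⟩

lemma isModel_map {e : α ≃ α} {P : GProgram α} {M : Set α} (h : IsModel P M) :
    IsModel (mapRule e '' P) (e '' M) := by
  rintro r ⟨r', hr', rfl⟩ hpos hneg
  refine ⟨r'.head, h r' hr' (fun y hy => ?_) (fun y hy hyM => ?_), rfl⟩
  · have := hpos (⟨y, hy, rfl⟩ : e y ∈ e '' r'.pos)
    rcases this with ⟨z, hz, hez⟩
    rwa [e.injective hez] at hz
  · exact hneg (e y) ⟨y, hy, rfl⟩ ⟨y, hyM, rfl⟩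

lemma mapRule_invol (e : α ≃ α) (r : GRule α) : mapRule e.symm (mapRule e r) = r := by
  cases r with
  | mk h p n =>
    simp only [mapRule, Equiv.symm_apply_apply, ← Set.image_comp]
    congr 1 <;> simp [Function.comp]

lemma image_map_invol (e : α ≃ α) (P : GProgram α) :
    mapRule e.symm '' (mapRule e '' P) = P := by
  ext r
  constructor
  · rintro ⟨r', ⟨r'', hr'', rfl⟩, rfl⟩
    rwa [mapRule_invol]
  · intro hr
    exact ⟨mapRule e r, ⟨r, hr, rfl⟩, mapRule_invol e r⟩

lemma reduct_map (e : α ≃ α) (P : GProgram α) (M : Set α) :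
    reduct (mapRule e '' P) (e '' M) = mapRule e '' reduct P M := by
  ext r
  constructor
  · rintro ⟨r', ⟨r'', hr'', rfl⟩, hneg, rfl⟩
    refine ⟨⟨r''.head, r''.pos, ∅⟩, ⟨r'', hr'', fun y hy hyM => ?_, rfl⟩, ?_⟩
    · exact hneg (e y) ⟨y, hy, rfl⟩ ⟨y, hyM, rfl⟩
    · simp [mapRule]
  · rintro ⟨r', ⟨r'', hr'', hneg, rfl⟩, rfl⟩
    refine ⟨mapRule e r'', ⟨r'', hr'', rfl⟩, fun y hy hyM => ?_, by simp [mapRule]⟩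
    rcases hy with ⟨z, hz, rfl⟩
    rcases hyM with ⟨w, hw, hew⟩
    rw [e.injective hew] at hw
    exact hneg z hz hw

lemma leastModel_map (e : α ≃ α) (P : GProgram α) :
    leastModel (mapRule e '' P) = e '' leastModel P := by
  apply Set.Subset.antisymm
  · intro x hx
    refine ⟨e.symm x, ?_, by simp⟩
    intro N hN
    have h2 : IsModel (mapRule e '' P) (e '' N) := isModel_map hN
    have := hx (e '' N) h2
    rcases this with ⟨y, hy, hey⟩
    have : y = e.symm x := by rw [← hey]; simp
    rwa [this] at hy
  · rintro x ⟨y, hy, rfl⟩ N hN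
    have h2 : IsModel P (e.symm '' N) := by
      have := isModel_map (e := e.symm) hN
      rwa [image_map_invol] at this
    have := hy (e.symm '' N) h2
    rcases this with ⟨z, hz, hez⟩
    have hz' : z = e y := by rw [← hez]; simp
    rwa [hz'] at hz

lemma isStableModel_map {e : α ≃ α} {P : GProgram α} {M : Set α}
    (h : IsStableModel P M) : IsStableModel (mapRule e '' P) (e '' M) := by
  unfold IsStableModel at *
  rw [reduct_map, leastModel_map, ← h]

end Aux

section Part1
variable {C : Type} {root a : C} {E : Set (C × C)}

lemma stProg_fact_g {x y : C} (h : (x, y) ∈ E) :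
    (⟨.g x y, ∅, ∅⟩ : GRule (StAtom C)) ∈ stProg root a E :=
  Or.inl (Or.inl (Or.inl (Or.inl ⟨(x, y), h, rfl⟩)))

lemma stProg_fact_st : (⟨.st root a, ∅, ∅⟩ : GRule (StAtom C)) ∈ stProg root a E :=
  Or.inl (Or.inl (Or.inl (Or.inr rfl)))

lemma stProg_rule_st {x y : C} (z : C) (hya : y ≠ a) (hyx : y ≠ x) :
    (⟨.st x y, {.st z x, .g x y, .chosen x y}, ∅⟩ : GRule (StAtom C)) ∈ stProg root a E :=
  Or.inl (Or.inl (Or.inr ⟨x, y, z, hya, hyx, rfl⟩))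

lemma stProg_rule_ch {x y : C} (z : C) (hya : y ≠ a) (hyx : y ≠ x) :
    (⟨.chosen x y, {.st z x, .g x y}, {.diff x y}⟩ : GRule (StAtom C)) ∈ stProg root a E :=
  Or.inl (Or.inr ⟨x, y, z, hya, hyx, rfl⟩)

lemma stProg_rule_df {x x' y : C} (hxx : x ≠ x') :
    (⟨.diff x y, {.chosen x' y}, ∅⟩ : GRule (StAtom C)) ∈ stProg root a E :=
  Or.inr ⟨x, x', y, hxx, rfl⟩

/-- The soundness invariant for stable models of the spanning-tree program. -/
def stSound (root a : C) (E : Set (C × C)) (M : Set (StAtom C)) : Set (StAtom C) :=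
  {m | match m with
    | .g x y => (x, y) ∈ E
    | .st x y => (x = root ∧ y = a) ∨
        ((x, y) ∈ E ∧ y ≠ a ∧ y ≠ x ∧ StAtom.chosen x y ∈ M ∧ ∃ z, StAtom.st z x ∈ M)
    | .chosen x y => (x, y) ∈ E ∧ y ≠ a ∧ y ≠ x ∧ (∃ z, StAtom.st z x ∈ M) ∧
        StAtom.diff x y ∉ M
    | .diff x y => ∃ x', x ≠ x' ∧ StAtom.chosen x' y ∈ M}

lemma stM_sound (hM : IsStableModel (stProg root a E) M) : M ⊆ stSound root a E M := by
  have hmod : IsModel (reduct (stProg root a E) M) (M ∩ stSound root a E M) := by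
    rintro r ⟨r', hr', hneg, rfl⟩ hpos -
    rcases hr' with ((((⟨p, hp, rfl⟩ | rfl) | ⟨x, y, z, hya, hyx, rfl⟩) |
        ⟨x, y, z, hya, hyx, rfl⟩) | ⟨x, x', y, hxx, rfl⟩)
    · exact ⟨hM.isModel_reduct _ ⟨_, stProg_fact_g hp, hneg, rfl⟩
        (fun b hb => (hpos hb).1) (by simp), hp⟩
    · exact ⟨hM.isModel_reduct _ ⟨_, stProg_fact_st, hneg, rfl⟩
        (fun b hb => (hpos hb).1) (by simp), Or.inl ⟨rfl, rfl⟩⟩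
    · have h1 := hpos (show StAtom.st z x ∈ _ by simp)
      have h2 := hpos (show StAtom.g x y ∈ _ by simp)
      have h3 := hpos (show StAtom.chosen x y ∈ _ by simp)
      refine ⟨hM.isModel_reduct _ ⟨_, stProg_rule_st z hya hyx, hneg, rfl⟩
        (fun b hb => (hpos hb).1) (by simp), Or.inr ⟨h2.2, hya, hyx, h3.1, z, h1.1⟩⟩
    · have h1 := hpos (show StAtom.st z x ∈ _ by simp)
      have h2 := hpos (show StAtom.g x y ∈ _ by simp)
      have hd : StAtom.diff x y ∉ M := hneg _ (by simp)
      exact ⟨hM.isModel_reduct _ ⟨_, stProg_rule_ch z hya hyx, hneg, rfl⟩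
        (fun b hb => (hpos hb).1) (by simp), h2.2, hya, hyx, ⟨z, h1.1⟩, hd⟩
    · have h1 := hpos (show StAtom.chosen x' y ∈ _ by simp)
      exact ⟨hM.isModel_reduct _ ⟨_, stProg_rule_df hxx, hneg, rfl⟩
        (fun b hb => (hpos hb).1) (by simp), x', hxx, h1.1⟩
  exact (hM.subset_of_model hmod).trans Set.inter_subset_right

lemma stM_g (hM : IsStableModel (stProg root a E) M) {x y : C} (h : (x, y) ∈ E) :
    StAtom.g x y ∈ M :=
  hM.isModel _ (stProg_fact_g h) (by simp) (by simp)

lemma stM_st (hM : IsStableModel (stProg root a E) M) {x y z : C}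
    (h1 : StAtom.st z x ∈ M) (h2 : StAtom.g x y ∈ M) (h3 : StAtom.chosen x y ∈ M)
    (hya : y ≠ a) (hyx : y ≠ x) : StAtom.st x y ∈ M := by
  refine hM.isModel _ (stProg_rule_st z hya hyx) ?_ (by simp)
  intro b hb
  simp only [Set.mem_insert_iff, Set.mem_singleton_iff] at hb
  rcases hb with rfl | rfl | rfl <;> assumption

lemma stM_df (hM : IsStableModel (stProg root a E) M) {x x' y : C}
    (h : StAtom.chosen x' y ∈ M) (hxx : x ≠ x') : StAtom.diff x y ∈ M := by
  refine hM.isModel _ (stProg_rule_df hxx) ?_ (by simp)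
  intro b hb
  simp only [Set.mem_singleton_iff] at hb
  subst hb; exact h

lemma stM_ch (hM : IsStableModel (stProg root a E) M) {x y z : C}
    (h1 : StAtom.st z x ∈ M) (h2 : StAtom.g x y ∈ M)
    (hya : y ≠ a) (hyx : y ≠ x) (hd : StAtom.diff x y ∉ M) : StAtom.chosen x y ∈ M := by
  refine hM.isModel _ (stProg_rule_ch z hya hyx) ?_ ?_
  · intro b hb
    simp only [Set.mem_insert_iff, Set.mem_singleton_iff] at hb
    rcases hb with rfl | rfl <;> assumption
  · intro b hb
    simp only [Set.mem_singleton_iff] at hb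
    subst hb; exact hd

lemma stM_ch_st (hM : IsStableModel (stProg root a E) M) {x y : C}
    (h : StAtom.chosen x y ∈ M) : StAtom.st x y ∈ M := by
  have hs := stM_sound hM h
  simp only [stSound, Set.mem_setOf_eq] at hs
  obtain ⟨hE, hya, hyx, ⟨z, hz⟩, -⟩ := hs
  exact stM_st hM hz (stM_g hM hE) h hya hyx

lemma stM_funct (hM : IsStableModel (stProg root a E) M) {x x' y : C}
    (h : StAtom.chosen x y ∈ M) (h' : StAtom.chosen x' y ∈ M) : x = x' := by
  by_contra hxx
  have hd := stM_df hM h' hxx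
  have hs := stM_sound hM h
  simp only [stSound, Set.mem_setOf_eq] at hs
  exact hs.2.2.2.2 hd

lemma stM_reach (hM : IsStableModel (stProg root a E) M)
    (hsym : ∀ x y, (x, y) ∈ E → (y, x) ∈ E)
    (hconn : ∀ y, (∃ z, (y, z) ∈ E) →
      Relation.ReflTransGen (fun u v => (u, v) ∈ E) a y) :
    ∀ y, (∃ z, (y, z) ∈ E) → ∃ x, StAtom.st x y ∈ M := by
  have key : ∀ y, Relation.ReflTransGen (fun u v => (u, v) ∈ E) a y →
      y = a ∨ ∃ x, StAtom.st x y ∈ M := by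
    intro y h
    induction h with
    | refl => exact Or.inl rfl
    | @tail b c hab hbc ih =>
      by_cases hca : c = a
      · exact Or.inl hca
      right
      have hb : ∃ x, StAtom.st x b ∈ M := by
        rcases ih with rfl | h
        · exact ⟨root, hM.isModel _ stProg_fact_st (by simp) (by simp)⟩
        · exact h
      obtain ⟨x, hxb⟩ := hb
      by_cases hcb : c = b
      · exact ⟨x, hcb ▸ hxb⟩
      by_cases hd : StAtom.diff b c ∈ M
      · have hs := stM_sound hM hd
        simp only [stSound, Set.mem_setOf_eq] at hs
        obtain ⟨x', -, hch⟩ := hs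
        exact ⟨x', stM_ch_st hM hch⟩
      · have hch := stM_ch hM hxb (stM_g hM hbc) hca hcb hd
        exact ⟨b, stM_ch_st hM hch⟩
  intro y hy
  rcases key y (hconn y hy) with rfl | h
  · exact ⟨root, hM.isModel _ stProg_fact_st (by simp) (by simp)⟩
  · exact h

lemma stM_spanning (hM : IsStableModel (stProg root a E) M)
    (hsym : ∀ x y, (x, y) ∈ E → (y, x) ∈ E)
    (hroot : ∀ y, (root, y) ∉ E ∧ (y, root) ∉ E)
    (hconn : ∀ y, (∃ z, (y, z) ∈ E) →
      Relation.ReflTransGen (fun u v => (u, v) ∈ E) a y) :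
    IsSpanningTree E a {p : C × C | StAtom.st p.1 p.2 ∈ M ∧ p.1 ≠ root} := by
  set T : Set (C × C) := {p : C × C | StAtom.st p.1 p.2 ∈ M ∧ p.1 ≠ root} with hT
  have soundSt : ∀ x y, StAtom.st x y ∈ M → x ≠ root →
      (x, y) ∈ E ∧ y ≠ a ∧ y ≠ x ∧ StAtom.chosen x y ∈ M := by
    intro x y h hx
    have hs := stM_sound hM h
    simp only [stSound, Set.mem_setOf_eq] at hs
    rcases hs with ⟨rfl, -⟩ | ⟨h1, h2, h3, h4, -⟩
    · exact absurd rfl hx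
    · exact ⟨h1, h2, h3, h4⟩
  refine ⟨?_, ?_, ?_, ?_⟩
  · rintro ⟨x, y⟩ ⟨hst, hx⟩
    exact (soundSt x y hst hx).1
  · rintro ⟨x, y⟩ ⟨hst, hx⟩
    exact (soundSt x y hst hx).2.1
  · intro y hy hya
    obtain ⟨x, hxy⟩ := stM_reach hM hsym hconn y hy
    have hxr : x ≠ root := by
      have hs := stM_sound hM hxy
      simp only [stSound, Set.mem_setOf_eq] at hs
      rcases hs with ⟨-, rfl⟩ | ⟨h1, -⟩
      · exact absurd rfl hya
      · rintro rfl; exact (hroot y).2 (hsym _ _ h1)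
    refine ⟨x, ⟨hxy, hxr⟩, ?_⟩
    rintro x' ⟨hst', hx'⟩
    exact stM_funct hM (soundSt x' y hst' hx').2.2.2 (soundSt x y hxy hxr).2.2.2
  · have hGood : M ⊆ {m | ∀ x y, m = StAtom.st x y → (x = root ∧ y = a) ∨
        Relation.ReflTransGen (fun u v => (u, v) ∈ T) a y} := by
      have hmod : IsModel (reduct (stProg root a E) M) (M ∩ {m | ∀ x y,
          m = StAtom.st x y → (x = root ∧ y = a) ∨
          Relation.ReflTransGen (fun u v => (u, v) ∈ T) a y}) := by
        rintro r ⟨r', hr', hneg, rfl⟩ hpos -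
        rcases hr' with ((((⟨p, hp, rfl⟩ | rfl) | ⟨x, y, z, hya, hyx, rfl⟩) |
            ⟨x, y, z, hya, hyx, rfl⟩) | ⟨x, x', y, hxx, rfl⟩)
        · refine ⟨stM_g hM hp, ?_⟩
          intro x y h; exact absurd h (by simp)
        · refine ⟨hM.isModel _ stProg_fact_st (by simp) (by simp), ?_⟩
          intro x y h
          simp only [StAtom.st.injEq] at h
          exact Or.inl ⟨h.1.symm, h.2.symm⟩
        · have h1 := hpos (show StAtom.st z x ∈ _ by simp)
          have h2 := hpos (show StAtom.g x y ∈ _ by simp)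
          have h3 := hpos (show StAtom.chosen x y ∈ _ by simp)
          have hstxy : StAtom.st x y ∈ M := stM_st hM h1.1 h2.1 h3.1 hya hyx
          refine ⟨hstxy, ?_⟩
          rintro x' y' h
          simp only [StAtom.st.injEq] at h
          obtain ⟨rfl, rfl⟩ := h
          right
          have hax : Relation.ReflTransGen (fun u v => (u, v) ∈ T) a x := by
            rcases h1.2 z x rfl with ⟨-, rfl⟩ | h
            · exact Relation.ReflTransGen.refl
            · exact h
          refine hax.tail ?_
          have hE : (x, y) ∈ E := by
            have hs := stM_sound hM h2.1
            simpa [stSound] using hs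
          have hxr : x ≠ root := by
            rintro rfl; exact (hroot y).1 hE
          exact ⟨hstxy, hxr⟩
        · have h1 := hpos (show StAtom.st z x ∈ _ by simp)
          have h2 := hpos (show StAtom.g x y ∈ _ by simp)
          have hd : StAtom.diff x y ∉ M := hneg _ (by simp)
          refine ⟨stM_ch hM h1.1 h2.1 hya hyx hd, ?_⟩
          intro x' y' h; exact absurd h (by simp)
        · have h1 := hpos (show StAtom.chosen x' y ∈ _ by simp)
          refine ⟨stM_df hM h1.1 hxx, ?_⟩
          intro x'' y'' h; exact absurd h (by simp)
      exact (hM.subset_of_model hmod).trans Set.inter_subset_right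
    intro y hy
    by_cases hya : y = a
    · subst hya; exact Relation.ReflTransGen.refl
    obtain ⟨x, hxy⟩ := stM_reach hM hsym hconn y hy
    rcases hGood hxy x y rfl with ⟨-, rfl⟩ | h
    · exact absurd rfl hya
    · exact h

/-- Breadth-first levels from `a`. -/
def stLvl (a : C) (E : Set (C × C)) : ℕ → Set C
  | 0 => {a}
  | n + 1 => stLvl a E n ∪ {y | ∃ x ∈ stLvl a E n, (x, y) ∈ E}

lemma stLvl_mono {m n : ℕ} (h : m ≤ n) : stLvl a E m ⊆ stLvl a E n := by
  induction h with
  | refl => exact subset_rfl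
  | step _ ih => exact ih.trans Set.subset_union_left

lemma rtg_stLvl {y : C} (h : Relation.ReflTransGen (fun u v => (u, v) ∈ E) a y) :
    ∃ n, y ∈ stLvl a E n := by
  induction h with
  | refl => exact ⟨0, rfl⟩
  | @tail b c _ hbc ih =>
    obtain ⟨n, hb⟩ := ih
    exact ⟨n + 1, Or.inr ⟨b, hb, hbc⟩⟩

lemma stLvl_node (hsym : ∀ x y, (x, y) ∈ E → (y, x) ∈ E) :
    ∀ n, ∀ y ∈ stLvl a E n, y = a ∨ ∃ z, (y, z) ∈ E := by
  intro n
  induction n with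
  | zero => intro y hy; exact Or.inl hy
  | succ n ih =>
    rintro y (hy | ⟨x, -, hxy⟩)
    · exact ih y hy
    · exact Or.inr ⟨x, hsym _ _ hxy⟩

lemma stM_exists (hsym : ∀ x y, (x, y) ∈ E → (y, x) ∈ E)
    (hconn : ∀ y, (∃ z, (y, z) ∈ E) →
      Relation.ReflTransGen (fun u v => (u, v) ∈ E) a y) :
    ∃ M, IsStableModel (stProg root a E) M := by
  classical
  -- choose a parent for every non-source node
  have hpar : ∀ y : C, ∃ p : C, (∃ z, (y, z) ∈ E) → y ≠ a →
      (p, y) ∈ E ∧ p ≠ y ∧ ∃ m, p ∈ stLvl a E m ∧ y ∉ stLvl a E m := by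
    intro y
    by_cases hy : (∃ z, (y, z) ∈ E) ∧ y ≠ a
    · have hex : ∃ n, y ∈ stLvl a E n := rtg_stLvl (hconn y hy.1)
      have hn := Nat.find_spec hex
      have hn0 : Nat.find hex ≠ 0 := by
        intro h
        rw [h] at hn
        exact hy.2 hn
      obtain ⟨m, hm⟩ := Nat.exists_eq_succ_of_ne_zero hn0
      have hym : y ∉ stLvl a E m := Nat.find_min hex (by omega)
      rw [hm] at hn
      rcases hn with hn | ⟨x, hxm, hxy⟩
      · exact absurd hn hym
      · exact ⟨x, fun _ _ => ⟨hxy, by rintro rfl; exact hym hxm, m, hxm, hym⟩⟩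
    · exact ⟨y, fun h1 h2 => absurd ⟨h1, h2⟩ hy⟩
  choose par hspec using hpar
  set M₀ : Set (StAtom C) := {m | match m with
    | .g x y => (x, y) ∈ E
    | .st x y => (x = root ∧ y = a) ∨ ((∃ z, (y, z) ∈ E) ∧ y ≠ a ∧ x = par y)
    | .chosen x y => (∃ z, (y, z) ∈ E) ∧ y ≠ a ∧ x = par y
    | .diff x y => (∃ z, (y, z) ∈ E) ∧ y ≠ a ∧ x ≠ par y} with hM₀
  refine ⟨M₀, ?_⟩
  have hmodel : IsModel (reduct (stProg root a E) M₀) M₀ := by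
    rintro r ⟨r', hr', hneg, rfl⟩ hpos -
    rcases hr' with ((((⟨p, hp, rfl⟩ | rfl) | ⟨x, y, z, hya, hyx, rfl⟩) |
        ⟨x, y, z, hya, hyx, rfl⟩) | ⟨x, x', y, hxx, rfl⟩)
    · exact hp
    · exact Or.inl ⟨rfl, rfl⟩
    · have h3 := hpos (show StAtom.chosen x y ∈ _ by simp)
      exact Or.inr h3
    · have h2 := hpos (show StAtom.g x y ∈ _ by simp)
      have hd : StAtom.diff x y ∉ M₀ := hneg _ (by simp)
      have hyV : ∃ z, (y, z) ∈ E := ⟨x, hsym _ _ h2⟩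
      have hxp : x = par y := by
        by_contra hxp
        exact hd ⟨hyV, hya, hxp⟩
      exact ⟨hyV, hya, hxp⟩
    · have h1 := hpos (show StAtom.chosen x' y ∈ _ by simp)
      obtain ⟨hyV, hya, rfl⟩ := h1
      exact ⟨hyV, hya, hxx⟩
  apply Set.Subset.antisymm
  · -- M₀ ⊆ leastModel
    intro m hm
    refine Set.mem_sInter.2 fun N hN => ?_
    have hNg : ∀ x y : C, (x, y) ∈ E → StAtom.g x y ∈ N := by
      intro x y h
      exact hN _ ⟨_, stProg_fact_g h, by simp, rfl⟩ (by simp) (by simp)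
    have hNst : StAtom.st root a ∈ N :=
      hN _ ⟨_, stProg_fact_st, by simp, rfl⟩ (by simp) (by simp)
    have key : ∀ n, ∀ y ∈ stLvl a E n, y ≠ a →
        StAtom.chosen (par y) y ∈ N ∧ StAtom.st (par y) y ∈ N := by
      intro n
      induction n using Nat.strong_induction_on with
      | _ n ih =>
        intro y hyD hya
        have hyV : ∃ z, (y, z) ∈ E := (stLvl_node hsym n y hyD).resolve_left hya
        obtain ⟨hE', hne, m, hpm, hym⟩ := hspec y hyV hya
        have hmn : m < n := by
          by_contra h
          exact hym (stLvl_mono (by omega) hyD)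
        have hz : ∃ z, StAtom.st z (par y) ∈ N := by
          by_cases hpa : par y = a
          · exact ⟨root, by rw [hpa]; exact hNst⟩
          · exact ⟨par (par y), (ih m hmn (par y) hpm hpa).2⟩
        obtain ⟨z, hzN⟩ := hz
        have hgN : StAtom.g (par y) y ∈ N := hNg _ _ hE'
        have hdM : StAtom.diff (par y) y ∉ M₀ := fun h => h.2.2 rfl
        have hch : StAtom.chosen (par y) y ∈ N := by
          refine hN _ ⟨_, stProg_rule_ch z hya (Ne.symm hne), ?_, rfl⟩ ?_ (by simp)
          · intro b hb
            simp only [Set.mem_singleton_iff] at hb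
            subst hb; exact hdM
          · intro b hb
            simp only [Set.mem_insert_iff, Set.mem_singleton_iff] at hb
            rcases hb with rfl | rfl <;> assumption
        refine ⟨hch, ?_⟩
        refine hN _ ⟨_, stProg_rule_st z hya (Ne.symm hne), by simp, rfl⟩ ?_ (by simp)
        intro b hb
        simp only [Set.mem_insert_iff, Set.mem_singleton_iff] at hb
        rcases hb with rfl | rfl | rfl <;> assumption
    have keyV : ∀ y, (∃ z, (y, z) ∈ E) → y ≠ a →
        StAtom.chosen (par y) y ∈ N ∧ StAtom.st (par y) y ∈ N := by
      intro y hyV hya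
      obtain ⟨n, hn⟩ := rtg_stLvl (hconn y hyV)
      exact key n y hn hya
    match m, hm with
    | .g x y, hm => exact hNg x y hm
    | .st x y, hm =>
      rcases hm with ⟨rfl, rfl⟩ | ⟨hyV, hya, rfl⟩
      · exact hNst
      · exact (keyV y hyV hya).2
    | .chosen x y, hm =>
      obtain ⟨hyV, hya, rfl⟩ := hm
      exact (keyV y hyV hya).1
    | .diff x y, hm =>
      obtain ⟨hyV, hya, hxp⟩ := hm
      refine hN _ ⟨_, stProg_rule_df hxp, by simp, rfl⟩ ?_ (by simp)
      intro b hb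
      simp only [Set.mem_singleton_iff] at hb
      subst hb
      exact (keyV y hyV hya).1
  · exact Set.sInter_subset_of_mem hmodel

end Part1

section Part2
variable {S : Schema} {C : Type}

/-- Transport of ground atoms along a permutation of constants. -/
def mapGA (π : C ≃ C) (ga : GAtom S C) : GAtom S C := ⟨ga.p, fun i => π (ga.args i)⟩

/-- Transport of `foe` atoms along a permutation of constants. -/
def mapFA (π : C ≃ C) : FAtom S C → FAtom S C
  | .base a => .base (mapGA π a)
  | .chosen r w => .chosen r (w.map π)
  | .diff r w => .diff r (w.map π)

lemma mapFA_invol (π : C ≃ C) (x : FAtom S C) : mapFA π.symm (mapFA π x) = x := by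
  cases x with
  | base a => simp [mapFA, mapGA]
  | chosen r w => simp [mapFA, List.map_map, Function.comp]
  | diff r w => simp [mapFA, List.map_map, Function.comp]

/-- The permutation of `foe` atoms induced by a permutation of constants. -/
def eqFA (π : C ≃ C) : FAtom S C ≃ FAtom S C where
  toFun := mapFA π
  invFun := mapFA π.symm
  left_inv := mapFA_invol π
  right_inv := fun x => by
    have := mapFA_invol π.symm (S := S) x
    simpa using this

lemma eqFA_symm (π : C ≃ C) : (eqFA (S := S) π).symm = eqFA π.symm :=
  Equiv.ext fun _ => rfl

/-- The constants occurring in the atoms of a rule of `Q` are all fixed. -/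
def FixesConsts (π : C ≃ C) (Q : CProgram S C) : Prop :=
  ∀ r ∈ Q, ∀ t ∈ r.head :: (r.pos ++ r.neg), ∀ i c, t.args i = Term.const c → π c = c

lemma ground_map {π : C ≃ C} {t : Atom S C} (hfix : ∀ i c, t.args i = Term.const c → π c = c)
    (ν : ℕ → C) : mapGA π (t.ground ν) = t.ground (fun v => π (ν v)) := by
  unfold mapGA Atom.ground
  congr 1
  funext i
  rcases h : t.args i with v | c
  · change π (Term.eval ν (t.args i)) = _
    rw [h]; simp [Term.eval]
  · change π (Term.eval ν (t.args i)) = _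
    rw [h]; simp only [Term.eval]; exact hfix i c h

lemma posBody_map {π : C ≃ C} {Q : CProgram S C} (hfix : FixesConsts π Q)
    {i : Fin Q.length} (ν : ℕ → C) :
    mapFA π '' posBody (Q.get i) ν = posBody (Q.get i) (fun v => π (ν v)) := by
  have hQ : Q.get i ∈ Q := List.get_mem Q i
  ext x
  constructor
  · rintro ⟨y, ⟨t, ht, rfl⟩, rfl⟩
    refine ⟨t, ht, ?_⟩
    show FAtom.base (mapGA π (t.ground ν)) = _
    rw [ground_map (fun j c h => hfix _ hQ t (by
        simp only [List.mem_cons, List.mem_append]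
        exact Or.inr (Or.inl ht)) j c h) ν]
  · rintro ⟨t, ht, rfl⟩
    refine ⟨FAtom.base (t.ground ν), ⟨t, ht, rfl⟩, ?_⟩
    show FAtom.base (mapGA π (t.ground ν)) = _
    rw [ground_map (fun j c h => hfix _ hQ t (by
        simp only [List.mem_cons, List.mem_append]
        exact Or.inr (Or.inl ht)) j c h) ν]

lemma negBody_map {π : C ≃ C} {Q : CProgram S C} (hfix : FixesConsts π Q)
    {i : Fin Q.length} (ν : ℕ → C) :
    mapFA π '' negBody (Q.get i) ν = negBody (Q.get i) (fun v => π (ν v)) := by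
  have hQ : Q.get i ∈ Q := List.get_mem Q i
  ext x
  constructor
  · rintro ⟨y, ⟨t, ht, rfl⟩, rfl⟩
    refine ⟨t, ht, ?_⟩
    show FAtom.base (mapGA π (t.ground ν)) = _
    rw [ground_map (fun j c h => hfix _ hQ t (by
        simp only [List.mem_cons, List.mem_append]
        exact Or.inr (Or.inr ht)) j c h) ν]
  · rintro ⟨t, ht, rfl⟩
    refine ⟨FAtom.base (t.ground ν), ⟨t, ht, rfl⟩, ?_⟩
    show FAtom.base (mapGA π (t.ground ν)) = _
    rw [ground_map (fun j c h => hfix _ hQ t (by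
        simp only [List.mem_cons, List.mem_append]
        exact Or.inr (Or.inr ht)) j c h) ν]

lemma foe_map_subset (π : C ≃ C) (Q : CProgram S C) (edb : Set (GAtom S C))
    (hc : ∀ r ∈ Q, r.cgoals = []) (hfix : FixesConsts π Q)
    (hedb : ∀ ga ∈ edb, mapGA π ga ∈ edb) :
    mapRule (eqFA π) '' foe Q edb ⊆ foe Q edb := by
  rintro r ⟨r', hr', rfl⟩
  rcases hr' with ((((⟨ga, hga, rfl⟩ | ⟨i, ν, hnil, rfl⟩) | ⟨i, ν, hne, rfl⟩) |
      ⟨i, ν, hne, rfl⟩) | ⟨i, g, hg, ν, ν', h1, h2, rfl⟩)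
  · refine Or.inl (Or.inl (Or.inl (Or.inl ⟨mapGA π ga, hedb ga hga, ?_⟩)))
    simp [mapRule, eqFA, mapFA]
  · refine Or.inl (Or.inl (Or.inl (Or.inr ⟨i, fun v => π (ν v), hnil, ?_⟩)))
    have hQ : Q.get i ∈ Q := List.get_mem Q i
    have hhead : ∀ j c, (Q.get i).head.args j = Term.const c → π c = c :=
      fun j c h => hfix _ hQ (Q.get i).head (by simp) j c h
    simp only [mapRule]
    congr 1
    · show mapFA π (FAtom.base ((Q.get i).head.ground ν)) = _
      show FAtom.base (mapGA π ((Q.get i).head.ground ν)) = _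
      rw [ground_map hhead ν]
    · exact posBody_map hfix ν
    · exact negBody_map hfix ν
  · exact absurd (hc _ (List.get_mem Q i)) hne
  · exact absurd (hc _ (List.get_mem Q i)) hne
  · rw [hc _ (List.get_mem Q i)] at hg
    exact absurd hg (List.not_mem_nil (a := g))

lemma foe_map_eq (π : C ≃ C) (Q : CProgram S C) (edb : Set (GAtom S C))
    (hc : ∀ r ∈ Q, r.cgoals = []) (hfix : FixesConsts π Q) (hfix' : FixesConsts π.symm Q)
    (hedb : ∀ ga ∈ edb, mapGA π ga ∈ edb) (hedb' : ∀ ga ∈ edb, mapGA π.symm ga ∈ edb) :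
    mapRule (eqFA π) '' foe Q edb = foe Q edb := by
  apply Set.Subset.antisymm (foe_map_subset π Q edb hc hfix hedb)
  have h2 := foe_map_subset π.symm Q edb hc hfix' hedb'
  have h3 := Set.image_mono (f := mapRule (eqFA π)) h2
  rw [← eqFA_symm] at h3
  rwa [show mapRule (eqFA π) '' (mapRule (eqFA π).symm '' foe Q edb) = foe Q edb from ?_] at h3
  have := image_map_invol (eqFA (S := S) π).symm (foe Q edb)
  simpa using this

/-- The stratification rank on `foe` atoms. -/
def strRank (σ : S.pred → ℕ) : FAtom S C → ℕ
  | .base a => σ a.p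
  | _ => 0

lemma foe_strat (Q : CProgram S C) (σ : S.pred → ℕ) (edb : Set (GAtom S C))
    (hc : ∀ r ∈ Q, r.cgoals = []) (hσ : StratifiedBy Q σ) :
    ∀ r ∈ foe Q edb,
      (∀ x ∈ r.pos, strRank σ x ≤ strRank σ r.head) ∧
      (∀ x ∈ r.neg, strRank σ x < strRank σ r.head) := by
  rintro r hr
  rcases hr with ((((⟨ga, hga, rfl⟩ | ⟨i, ν, hnil, rfl⟩) | ⟨i, ν, hne, rfl⟩) |
      ⟨i, ν, hne, rfl⟩) | ⟨i, g, hg, ν, ν', h1, h2, rfl⟩)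
  · constructor <;> intro x hx <;> exact absurd hx (Set.notMem_empty x)
  · have hQ := hσ _ (List.get_mem Q i)
    constructor
    · rintro x ⟨t, ht, rfl⟩
      exact hQ.1 t ht
    · rintro x ⟨t, ht, rfl⟩
      exact hQ.2 t ht
  · exact absurd (hc _ (List.get_mem Q i)) hne
  · exact absurd (hc _ (List.get_mem Q i)) hne
  · rw [hc _ (List.get_mem Q i)] at hg
    exact absurd hg (List.not_mem_nil (a := g))

end Part2

lemma consts_finite {S : Schema} (Q : CProgram S ℕ) :
    {k : ℕ | ∃ r ∈ Q, ∃ t ∈ r.head :: (r.pos ++ r.neg), ∃ i, t.args i = Term.const k}.Finite := by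
  have hsub : {k : ℕ | ∃ r ∈ Q, ∃ t ∈ r.head :: (r.pos ++ r.neg), ∃ i, t.args i = Term.const k}
      ⊆ ⋃ r ∈ {r | r ∈ Q}, ⋃ t ∈ {t | t ∈ r.head :: (r.pos ++ r.neg)},
        ⋃ i, {k | t.args i = Term.const k} := by
    rintro k ⟨r, hr, t, ht, i, hi⟩
    simp only [Set.mem_iUnion]
    exact ⟨r, hr, t, ht, i, hi⟩
  refine Set.Finite.subset ?_ hsub
  refine Set.Finite.biUnion (List.finite_toSet Q) fun r _ => ?_
  refine Set.Finite.biUnion (List.finite_toSet _) fun t _ => ?_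
  refine Set.finite_iUnion fun i => ?_
  apply Set.Subsingleton.finite
  intro k1 h1 k2 h2
  simp only [Set.mem_setOf_eq] at h1 h2
  rw [h1] at h2
  exact (Term.const.injEq _ _).mp h2

/-- (1) Over any finite undirected graph `E` not incident to the fresh constant
`root`, in which every node is connected to the source `a`, the spanning-tree
choice program has a choice model, and in every choice model `M` the `st`
atoms (other than `st(root,a)`) form a spanning tree of the graph rooted at
`a`.
(2) This nondeterministic query is not expressible in standard stratified
Datalog: no stratified Datalog program without choice (here over domain `ℕ`
with `root = 0` and `a = 1`, with a binary graph predicate `gp` and a binary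
answer predicate `stp`) computes, on every such input graph, a spanning tree
rooted at `a` in each of its stable models. -/
theorem spanning_tree_choice_program_correct_and_not_expressible_without_choice :
    (∀ (C : Type) (root a : C) (E : Set (C × C)), root ≠ a → E.Finite →
      (∀ x y, (x, y) ∈ E → (y, x) ∈ E) →
      (∀ y, (root, y) ∉ E ∧ (y, root) ∉ E) →
      (∀ y, (∃ z, (y, z) ∈ E) →
        Relation.ReflTransGen (fun u v => (u, v) ∈ E) a y) →
      (∃ M, IsStableModel (stProg root a E) M) ∧
      ∀ M, IsStableModel (stProg root a E) M →
        IsSpanningTree E a {p : C × C | StAtom.st p.1 p.2 ∈ M ∧ p.1 ≠ root}) ∧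
    ¬ ∃ (S' : Schema) (Q : CProgram S' ℕ) (σ : S'.pred → ℕ) (gp stp : S'.pred),
        S'.ar gp = 2 ∧ S'.ar stp = 2 ∧
        (∀ r ∈ Q, r.cgoals = []) ∧ StratifiedBy Q σ ∧
        ∀ E : Set (ℕ × ℕ), E.Finite →
          (∀ x y, (x, y) ∈ E → (y, x) ∈ E) →
          (∀ y, (0, y) ∉ E ∧ (y, 0) ∉ E) →
          (∀ y, (∃ z, (y, z) ∈ E) →
            Relation.ReflTransGen (fun u v => (u, v) ∈ E) 1 y) →
          (∃ M, IsStableModel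
              (foe Q {ga | ∃ p ∈ E,
                ga = ⟨gp, fun i => if (i : ℕ) = 0 then p.1 else p.2⟩}) M) ∧
          ∀ M, IsStableModel
              (foe Q {ga | ∃ p ∈ E,
                ga = ⟨gp, fun i => if (i : ℕ) = 0 then p.1 else p.2⟩}) M →
            IsSpanningTree E 1 {p : ℕ × ℕ |
              FAtom.base ⟨stp, fun i => if (i : ℕ) = 0 then p.1 else p.2⟩ ∈ M} := by
  constructor
  · intro C root a E _hra _hfin hsym hroot hconn
    exact ⟨stM_exists hsym hconn, fun M hM => stM_spanning hM hsym hroot hconn⟩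
  · rintro ⟨S', Q, σ, gp, stp, -, -, hnochoice, hstrat, hQ⟩
    obtain ⟨B, hB⟩ := (consts_finite Q).bddAbove
    obtain ⟨b, c, d, hb, hc, hd⟩ : ∃ b c d : ℕ, b = B + 2 ∧ c = B + 3 ∧ d = B + 4 :=
      ⟨_, _, _, rfl, rfl, rfl⟩
    obtain ⟨E, hE⟩ : ∃ E : Set (ℕ × ℕ),
        E = {(1, b), (b, 1), (b, c), (c, b), (c, d), (d, c), (d, 1), (1, d)} := ⟨_, rfl⟩
    have m1b : ((1, b) : ℕ × ℕ) ∈ E := by rw [hE]; simp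
    have mb1 : ((b, 1) : ℕ × ℕ) ∈ E := by rw [hE]; simp
    have mbc : ((b, c) : ℕ × ℕ) ∈ E := by rw [hE]; simp
    have mcb : ((c, b) : ℕ × ℕ) ∈ E := by rw [hE]; simp
    have mcd : ((c, d) : ℕ × ℕ) ∈ E := by rw [hE]; simp
    have mdc : ((d, c) : ℕ × ℕ) ∈ E := by rw [hE]; simp
    have md1 : ((d, 1) : ℕ × ℕ) ∈ E := by rw [hE]; simp
    have m1d : ((1, d) : ℕ × ℕ) ∈ E := by rw [hE]; simp
    have hEfin : E.Finite := by
      rw [hE]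
      exact (((((((Set.finite_singleton _).insert _).insert _).insert _).insert _).insert
        _).insert _).insert _
    have hsymE : ∀ x y, (x, y) ∈ E → (y, x) ∈ E := by
      intro x y h
      rw [hE] at h
      simp only [Set.mem_insert_iff, Set.mem_singleton_iff, Prod.mk.injEq] at h
      rcases h with ⟨rfl, rfl⟩ | ⟨rfl, rfl⟩ | ⟨rfl, rfl⟩ | ⟨rfl, rfl⟩ | ⟨rfl, rfl⟩ |
        ⟨rfl, rfl⟩ | ⟨rfl, rfl⟩ | ⟨rfl, rfl⟩
      exacts [mb1, m1b, mcb, mbc, mdc, mcd, m1d, md1]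
    have hroot0 : ∀ y, (0, y) ∉ E ∧ (y, 0) ∉ E := by
      intro y
      constructor <;> intro h <;> rw [hE] at h <;>
        simp only [Set.mem_insert_iff, Set.mem_singleton_iff, Prod.mk.injEq] at h <;>
        omega
    have hconnE : ∀ y, (∃ z, (y, z) ∈ E) →
        Relation.ReflTransGen (fun u v => (u, v) ∈ E) 1 y := by
      rintro y ⟨z, hz⟩
      rw [hE] at hz
      simp only [Set.mem_insert_iff, Set.mem_singleton_iff, Prod.mk.injEq] at hz
      rcases hz with ⟨rfl, rfl⟩ | ⟨rfl, rfl⟩ | ⟨rfl, rfl⟩ | ⟨rfl, rfl⟩ | ⟨rfl, rfl⟩ |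
        ⟨rfl, rfl⟩ | ⟨rfl, rfl⟩ | ⟨rfl, rfl⟩
      · exact Relation.ReflTransGen.refl
      · exact Relation.ReflTransGen.single m1b
      · exact Relation.ReflTransGen.single m1b
      · exact (Relation.ReflTransGen.single m1b).tail mbc
      · exact (Relation.ReflTransGen.single m1b).tail mbc
      · exact Relation.ReflTransGen.single m1d
      · exact Relation.ReflTransGen.single m1d
      · exact Relation.ReflTransGen.refl
    -- the swap of the two symmetric nodes b and d
    set π : ℕ ≃ ℕ := Equiv.swap b d with hπ
    have hπb : π b = d := Equiv.swap_apply_left b d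
    have hπd : π d = b := Equiv.swap_apply_right b d
    have hπ1 : π 1 = 1 := Equiv.swap_apply_of_ne_of_ne (by omega) (by omega)
    have hπc : π c = c := Equiv.swap_apply_of_ne_of_ne (by omega) (by omega)
    have hπsymm : π.symm = π := Equiv.symm_swap b d
    have hfixQ : FixesConsts π Q := by
      intro r hr t ht i k hk
      have hkB : k ≤ B := hB ⟨r, hr, t, ht, i, hk⟩
      exact Equiv.swap_apply_of_ne_of_ne (by omega) (by omega)
    have hEinv : ∀ p ∈ E, ((π p.1, π p.2) : ℕ × ℕ) ∈ E := by
      intro p hp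
      rw [hE] at hp
      simp only [Set.mem_insert_iff, Set.mem_singleton_iff] at hp
      rcases hp with rfl | rfl | rfl | rfl | rfl | rfl | rfl | rfl <;>
        simp only [hπ1, hπb, hπc, hπd]
      exacts [m1d, md1, mdc, mcd, mcb, mbc, mb1, m1b]
    set edb : Set (GAtom S' ℕ) :=
      {ga | ∃ p ∈ E, ga = ⟨gp, fun i => if (i : ℕ) = 0 then p.1 else p.2⟩} with hedbdef
    have hedb : ∀ ga ∈ edb, mapGA π ga ∈ edb := by
      rintro ga ⟨p, hp, rfl⟩
      refine ⟨(π p.1, π p.2), hEinv p hp, ?_⟩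
      show GAtom.mk gp (fun i => π (if (i : ℕ) = 0 then p.1 else p.2)) = _
      have harg : (fun i : Fin (S'.ar gp) => π (if (i : ℕ) = 0 then p.1 else p.2)) =
          fun i : Fin (S'.ar gp) => if (i : ℕ) = 0 then π p.1 else π p.2 := by
        funext i
        split <;> rfl
      rw [harg]
    obtain ⟨⟨M, hM⟩, hall⟩ := hQ E hEfin hsymE hroot0 hconnE
    have hfoeinv : mapRule (eqFA π) '' foe Q edb = foe Q edb := by
      refine foe_map_eq π Q edb hnochoice hfixQ ?_ hedb ?_
      · rw [hπsymm]; exact hfixQ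
      · rw [hπsymm]; exact hedb
    have hM' : IsStableModel (foe Q edb) (eqFA π '' M) := by
      have := isStableModel_map (e := eqFA π) hM
      rwa [hfoeinv] at this
    have hMeq : eqFA π '' M = M :=
      stratified_unique (strRank σ) (foe_strat Q σ edb hnochoice hstrat) hM' hM
    obtain ⟨hsub, -, huniq, -⟩ := hall M hM
    obtain ⟨x, hxT, hxu⟩ := huniq c ⟨b, mcb⟩ (by omega)
    simp only [Set.mem_setOf_eq] at hxT
    have h2 : FAtom.base ⟨stp, fun i => if (i : ℕ) = 0 then π x else c⟩ ∈ M := by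
      have hm : mapFA π (FAtom.base ⟨stp, fun i => if (i : ℕ) = 0 then x else c⟩)
          ∈ eqFA π '' M := ⟨_, hxT, rfl⟩
      rw [hMeq] at hm
      have harg : (fun i : Fin (S'.ar stp) => π (if (i : ℕ) = 0 then x else c)) =
          fun i : Fin (S'.ar stp) => if (i : ℕ) = 0 then π x else c := by
        funext i
        split
        · rfl
        · exact hπc
      show FAtom.base ⟨stp, fun i => if (i : ℕ) = 0 then π x else c⟩ ∈ M
      rw [← harg]
      exact hm
    have hxT2 : ((π x, c) : ℕ × ℕ) ∈ {p : ℕ × ℕ |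
        FAtom.base ⟨stp, fun i => if (i : ℕ) = 0 then p.1 else p.2⟩ ∈ M} := h2
    have hfixx : π x = x := hxu (π x) hxT2
    have hxE : ((x, c) : ℕ × ℕ) ∈ E := hsub hxT
    have hxbd : x = b ∨ x = d := by
      rw [hE] at hxE
      simp only [Set.mem_insert_iff, Set.mem_singleton_iff, Prod.mk.injEq] at hxE
      omega
    rcases hxbd with rfl | rfl
    · rw [hπb] at hfixx; omega
    · rw [hπd] at hfixx; omega
end

section
/- Every XY-stratified program is locally stratified. -/
/-- A ground program is locally stratified (Przymusinski) when it admits a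
level mapping of ground atoms (into the ordinals) such that in each ground
rule the head's level is at least the level of each positive body atom and
strictly greater than the level of each negated body atom. -/
def LocallyStratified {α : Type} (G : GProgram α) : Prop :=
  ∃ ℓ : α → Ordinal.{0}, ∀ r ∈ G,
    (∀ a ∈ r.pos, ℓ a ≤ ℓ r.head) ∧ (∀ a ∈ r.neg, ℓ a < ℓ r.head)

/-- The temporal argument of an atom: either `T + k` (an offset `k` from the
temporal variable `T` of the rule) or a constant. -/
inductive TTerm : Type where
  | ofs (k : ℕ)
  | const (c : ℕ)
  deriving DecidableEq

def TTerm.eval (τ : ℕ) : TTerm → ℕ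
  | .ofs k => τ + k
  | .const c => c

/-- An atom of a (mutually recursive) predicate `p`, with its distinguished
temporal argument `t` and its ordinary arguments `args`. -/
structure RAtom (P : Type) (arP : P → ℕ) (C : Type) where
  p : P
  t : TTerm
  args : Fin (arP p) → Term C

/-- An atom of an extensional (database) predicate. -/
structure EAtom (E : Type) (arE : E → ℕ) (C : Type) where
  e : E
  args : Fin (arE e) → Term C

/-- A rule of an XY-program: a head and positive/negative recursive
(`posR`/`negR`) and extensional (`posE`/`negE`) body atoms. -/
structure XYRule (P E : Type) (arP : P → ℕ) (arE : E → ℕ) (C : Type) where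
  head : RAtom P arP C
  posR : List (RAtom P arP C)
  negR : List (RAtom P arP C)
  posE : List (EAtom E arE C)
  negE : List (EAtom E arE C)

/-- An X-rule: the temporal argument of every recursive body goal equals that
of the head. -/
def XYRule.IsXRule {P E : Type} {arP : P → ℕ} {arE : E → ℕ} {C : Type}
    (r : XYRule P E arP arE C) : Prop :=
  ∃ h : ℕ, r.head.t = .ofs h ∧ ∀ a ∈ r.posR ++ r.negR, a.t = .ofs h

/-- A Y-rule: the temporal argument of some recursive body goals is one less
than that of the head (via the successor `J+1`), the others being equal to
it. -/
def XYRule.IsYRule {P E : Type} {arP : P → ℕ} {arE : E → ℕ} {C : Type}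
    (r : XYRule P E arP arE C) : Prop :=
  ∃ h : ℕ, r.head.t = .ofs (h + 1) ∧
    (∀ a ∈ r.posR ++ r.negR, a.t = .ofs h ∨ a.t = .ofs (h + 1)) ∧
    ∃ a ∈ r.posR ++ r.negR, a.t = .ofs h

/-- An exit rule: the head's temporal argument is a constant and the body has
no recursive goals. -/
def XYRule.IsExitRule {P E : Type} {arP : P → ℕ} {arE : E → ℕ} {C : Type}
    (r : XYRule P E arP arE C) : Prop :=
  (∃ c, r.head.t = .const c) ∧ r.posR = [] ∧ r.negR = []

/-- An XY-program: every rule is an X-rule, a Y-rule, or an exit rule. -/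
def IsXYProgram {P E : Type} {arP : P → ℕ} {arE : E → ℕ} {C : Type}
    (Pr : List (XYRule P E arP arE C)) : Prop :=
  ∀ r ∈ Pr, r.IsXRule ∨ r.IsYRule ∨ r.IsExitRule

/-! ## The bistate version -/

/-- Predicates of the bistate version: `new`/`old` copies (`true` = `new`) of
the recursive predicates, plus the extensional predicates. -/
abbrev BiPred (P E : Type) := (Bool × P) ⊕ E

def biar {P E : Type} (arP : P → ℕ) (arE : E → ℕ) : BiPred P E → ℕ :=
  Sum.elim (fun bp => arP bp.2) arE

/-- A non-ground atom of an ordinary (non-temporal) normal program. -/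
structure NAtom (Q : Type) (arQ : Q → ℕ) (C : Type) where
  q : Q
  args : Fin (arQ q) → Term C

/-- A non-ground rule of an ordinary normal program. -/
structure NRule (Q : Type) (arQ : Q → ℕ) (C : Type) where
  head : NAtom Q arQ C
  pos : List (NAtom Q arQ C)
  neg : List (NAtom Q arQ C)

/-- The bistate version of an XY-rule: head predicates get prefix `new`; a
recursive body predicate gets prefix `new` if its temporal argument equals the
head's, and `old` otherwise; temporal arguments are dropped. -/
def XYRule.bistate {P E : Type} {arP : P → ℕ} {arE : E → ℕ} {C : Type}
    (r : XYRule P E arP arE C) : NRule (BiPred P E) (biar arP arE) C where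
  head := ⟨Sum.inl (true, r.head.p), r.head.args⟩
  pos := (r.posR.map fun a =>
            (⟨Sum.inl (decide (a.t = r.head.t), a.p), a.args⟩ :
              NAtom (BiPred P E) (biar arP arE) C)) ++
         r.posE.map fun a => ⟨Sum.inr a.e, a.args⟩
  neg := (r.negR.map fun a =>
            (⟨Sum.inl (decide (a.t = r.head.t), a.p), a.args⟩ :
              NAtom (BiPred P E) (biar arP arE) C)) ++
         r.negE.map fun a => ⟨Sum.inr a.e, a.args⟩

/-- A stratification of an ordinary normal program. -/
def NStratifiedBy {Q : Type} {arQ : Q → ℕ} {C : Type}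
    (Pr : List (NRule Q arQ C)) (σ : Q → ℕ) : Prop :=
  ∀ r ∈ Pr, (∀ a ∈ r.pos, σ a.q ≤ σ r.head.q) ∧ (∀ a ∈ r.neg, σ a.q < σ r.head.q)

/-- An XY-program is XY-stratified when its bistate version is a stratified
program. -/
def XYStratified {P E : Type} {arP : P → ℕ} {arE : E → ℕ} {C : Type}
    (Pr : List (XYRule P E arP arE C)) : Prop :=
  IsXYProgram Pr ∧ ∃ σ : BiPred P E → ℕ, NStratifiedBy (Pr.map XYRule.bistate) σ

/-! ## Ground instantiation of an XY-program -/

/-- Ground atoms: timed ground atoms of the recursive predicates, and ground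
atoms of the extensional predicates. -/
abbrev GXAtom (P E : Type) (arP : P → ℕ) (arE : E → ℕ) (C : Type) :=
  (Σ p : P, ℕ × (Fin (arP p) → C)) ⊕ (Σ e : E, Fin (arE e) → C)

def RAtom.ground {P E : Type} {arP : P → ℕ} {arE : E → ℕ} {C : Type}
    (a : RAtom P arP C) (τ : ℕ) (ν : ℕ → C) : GXAtom P E arP arE C :=
  Sum.inl ⟨a.p, (a.t.eval τ, fun i => (a.args i).eval ν)⟩

def EAtom.ground {P E : Type} {arP : P → ℕ} {arE : E → ℕ} {C : Type}
    (a : EAtom E arE C) (ν : ℕ → C) : GXAtom P E arP arE C :=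
  Sum.inr ⟨a.e, fun i => (a.args i).eval ν⟩

/-- The ground instantiation of an XY-program `Pr` over the extensional
database `edb` (`τ` is the value of the temporal variable, `ν` the values of
the ordinary variables). -/
def groundXY {P E : Type} {arP : P → ℕ} {arE : E → ℕ} {C : Type}
    (Pr : List (XYRule P E arP arE C)) (edb : Set (Σ e : E, Fin (arE e) → C)) :
    GProgram (GXAtom P E arP arE C) :=
  {r | ∃ e ∈ edb, r = ⟨Sum.inr e, ∅, ∅⟩} ∪
  {r | ∃ rl ∈ Pr, ∃ τ : ℕ, ∃ ν : ℕ → C,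
        r = ⟨rl.head.ground τ ν,
             {x | ∃ a ∈ rl.posR, x = a.ground τ ν} ∪
               {x | ∃ a ∈ rl.posE, x = a.ground ν},
             {x | ∃ a ∈ rl.negR, x = a.ground τ ν} ∪
               {x | ∃ a ∈ rl.negE, x = a.ground ν}⟩}

/-! ### Auxiliary level function -/

open Ordinal in
/-- Level of a timed atom: `ω·(t+1) + m`. -/
def xyLvl (t m : ℕ) : Ordinal.{0} := omega0 * ((t : Ordinal) + 1) + m

open Ordinal in
lemma xyLvl_nat_lt (m t n : ℕ) : (m : Ordinal) < xyLvl t n := by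
  have h1 : (m : Ordinal) < omega0 := nat_lt_omega0 m
  have h2 : omega0 ≤ omega0 * ((t : Ordinal) + 1) := by
    calc omega0 = omega0 * 1 := (mul_one _).symm
    _ ≤ omega0 * ((t : Ordinal) + 1) := by
        apply mul_le_mul_right
        simpa using Ordinal.le_add_left 1 (t : Ordinal)
  calc (m : Ordinal) < omega0 := h1
  _ ≤ omega0 * ((t : Ordinal) + 1) := h2
  _ ≤ xyLvl t n := le_self_add

open Ordinal in
lemma xyLvl_lt_of_time_lt {s t : ℕ} (h : s < t) (m n : ℕ) :
    xyLvl s m < xyLvl t n := by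
  have h1 : xyLvl s m < omega0 * ((s : Ordinal) + 1) + omega0 :=
    add_lt_add_right (nat_lt_omega0 m) _
  have h2 : omega0 * ((s : Ordinal) + 1) + omega0
      = omega0 * (((s : Ordinal) + 1) + 1) := (mul_add_one _ _).symm
  have h3 : omega0 * (((s : Ordinal) + 1) + 1) ≤ omega0 * ((t : Ordinal) + 1) := by
    apply mul_le_mul_right
    have hnat : s + 1 + 1 ≤ t + 1 := by omega
    exact_mod_cast hnat
  calc xyLvl s m < omega0 * (((s : Ordinal) + 1) + 1) := h2 ▸ h1
  _ ≤ omega0 * ((t : Ordinal) + 1) := h3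
  _ ≤ xyLvl t n := le_self_add

open Ordinal in
lemma xyLvl_le_of_le {t m n : ℕ} (h : m ≤ n) : xyLvl t m ≤ xyLvl t n :=
  add_le_add_right (by exact_mod_cast h) _

open Ordinal in
lemma xyLvl_lt_of_lt {t m n : ℕ} (h : m < n) : xyLvl t m < xyLvl t n :=
  add_lt_add_right (by exact_mod_cast h) _

/-- Time analysis for body atoms of an XY rule. -/
lemma xy_time_cases {P E : Type} {arP : P → ℕ} {arE : E → ℕ} {C : Type}
    {rl : XYRule P E arP arE C}
    (hr : rl.IsXRule ∨ rl.IsYRule ∨ rl.IsExitRule)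
    {a : RAtom P arP C} (ha : a ∈ rl.posR ++ rl.negR) (τ : ℕ) :
    a.t = rl.head.t ∨ a.t.eval τ < rl.head.t.eval τ := by
  rcases hr with ⟨h, hh, hb⟩ | ⟨h, hh, hb, -⟩ | ⟨-, h1, h2⟩
  · left; rw [hb a ha, hh]
  · rcases hb a ha with hat | hat
    · right; rw [hat, hh]; simp [TTerm.eval]
    · left; rw [hat, hh]
  · simp [h1, h2] at ha

/-- Every XY-stratified program is locally stratified (its
ground instantiation, over any extensional database, admits a level
mapping). -/
theorem xy_stratified_is_locally_stratified
    {P E C : Type} {arP : P → ℕ} {arE : E → ℕ}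
    (Pr : List (XYRule P E arP arE C)) (hxy : XYStratified Pr)
    (edb : Set (Σ e : E, Fin (arE e) → C)) :
    LocallyStratified (groundXY Pr edb) := by
  obtain ⟨hXY, σ, hσ⟩ := hxy
  refine ⟨fun x =>
    Sum.elim (fun s => xyLvl s.2.1 (σ (Sum.inl (true, s.1))))
      (fun s => (σ (Sum.inr s.1) : Ordinal.{0})) x, ?_⟩
  rintro r (⟨e, he, rfl⟩ | ⟨rl, hrl, τ, ν, rfl⟩)
  · constructor <;> simp
  · have hstrat := hσ rl.bistate (List.mem_map_of_mem hrl)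
    have hheadq : rl.bistate.head.q = Sum.inl (true, rl.head.p) := rfl
    have hcase := fun a ha => xy_time_cases (hXY rl hrl) (a := a) ha τ
    constructor
    · -- positive body atoms
      rintro x (⟨a, ha, rfl⟩ | ⟨a, ha, rfl⟩)
      · rcases hcase a (List.mem_append_left _ ha) with heq | hlt
        · -- same time: use stratification
          have hb : (⟨Sum.inl (decide (a.t = rl.head.t), a.p), a.args⟩ :
              NAtom (BiPred P E) (biar arP arE) C) ∈ rl.bistate.pos := by
            apply List.mem_append_left
            exact List.mem_map_of_mem ha
          have := hstrat.1 _ hb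
          rw [hheadq] at this
          simp only [heq, decide_true] at this
          simp only [RAtom.ground, Sum.elim_inl, heq]
          exact xyLvl_le_of_le this
        · simp only [RAtom.ground, Sum.elim_inl]
          exact le_of_lt (xyLvl_lt_of_time_lt hlt _ _)
      · -- extensional positive atom
        simp only [EAtom.ground, RAtom.ground, Sum.elim_inr, Sum.elim_inl]
        exact le_of_lt (xyLvl_nat_lt _ _ _)
    · -- negative body atoms
      rintro x (⟨a, ha, rfl⟩ | ⟨a, ha, rfl⟩)
      · rcases hcase a (List.mem_append_right _ ha) with heq | hlt
        · have hb : (⟨Sum.inl (decide (a.t = rl.head.t), a.p), a.args⟩ :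
              NAtom (BiPred P E) (biar arP arE) C) ∈ rl.bistate.neg := by
            apply List.mem_append_left
            exact List.mem_map_of_mem ha
          have := hstrat.2 _ hb
          rw [hheadq] at this
          simp only [heq, decide_true] at this
          simp only [RAtom.ground, Sum.elim_inl, heq]
          exact xyLvl_lt_of_lt this
        · simp only [RAtom.ground, Sum.elim_inl]
          exact xyLvl_lt_of_time_lt hlt _ _
      · simp only [EAtom.ground, RAtom.ground, Sum.elim_inr, Sum.elim_inl]
        exact xyLvl_nat_lt _ _ _
end
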